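/- arXiv:1010.5212 — 7 statements merged into one kernel-verified Lean document; each statement's English description precedes it below -/
import Mathlib

section
/- A set A ⊆ ℕ is generically computable if and only if A is densely approximable by c.e. sets, i.e. there exist c.e. sets C₀ and C₁ with C₀ ⊆ ℕ \ A, C₁ ⊆ A, and C₀ ∪ C₁ of density 1. -/
open Filter

open scoped Classical in
/-- `ρ_n(A) = |A ∩ {0,…,n}| / (n+1)`. -/
noncomputable def partialDensity (A : Set ℕ) (n : ℕ) : ℝ :=
  ((Finset.range (n + 1)).filter (· ∈ A)).card / (n + 1)

/-- The upper density of `A`: `limsup_n ρ_n(A)`. -/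
noncomputable def upperDensity (A : Set ℕ) : ℝ :=
  Filter.limsup (partialDensity A) Filter.atTop

/-- `A` has asymptotic density `r`: `ρ_n(A) → r`. -/
def HasDensity (A : Set ℕ) (r : ℝ) : Prop :=
  Filter.Tendsto (partialDensity A) Filter.atTop (nhds r)

open scoped Classical in
/-- The characteristic function of `A` (with values in `{0,1} ⊆ ℕ`). -/
noncomputable def charFun (A : Set ℕ) : ℕ → ℕ := fun n => if n ∈ A then 1 else 0

/-- `Φ` is a generic description of `A`: `Φ(x) = χ_A(x)` whenever `Φ(x)` is defined,
and the domain of `Φ` has density 1. -/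
def IsGenericDescription (Φ : ℕ →. ℕ) (A : Set ℕ) : Prop :=
  (∀ x m, m ∈ Φ x → m = charFun A x) ∧ HasDensity {x | (Φ x).Dom} 1

/-- `A` is generically computable: some partial computable function is a generic
description of `A`. -/
def GenericallyComputable (A : Set ℕ) : Prop :=
  ∃ Φ : ℕ →. ℕ, Partrec Φ ∧ IsGenericDescription Φ A

/-- `A` is computably enumerable: `A` is the domain of a partial computable function. -/
def CE (A : Set ℕ) : Prop :=
  ∃ f : ℕ →. ℕ, Partrec f ∧ A = {x | (f x).Dom}

/-- `A` is a computable set. -/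
def ComputableSet (A : Set ℕ) : Prop := ComputablePred (· ∈ A)

/-- `A` is immune: infinite, with no infinite c.e. subset. -/
def Immune (A : Set ℕ) : Prop :=
  A.Infinite ∧ ∀ W : Set ℕ, CE W → W.Infinite → ¬W ⊆ A

/-- `A` is bi-immune: both `A` and its complement are immune. -/
def BiImmune (A : Set ℕ) : Prop := Immune A ∧ Immune Aᶜ

/-- `A` and `B` are generically similar: their symmetric difference has density 0. -/
def GenericallySimilar (A B : Set ℕ) : Prop := HasDensity (symmDiff A B) 0

/-- `A` is coarsely computable: generically similar to a computable set. -/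
def CoarselyComputable (A : Set ℕ) : Prop :=
  ∃ C : Set ℕ, ComputableSet C ∧ GenericallySimilar A C

/-- `R_k = {m : 2^k ∣ m, 2^(k+1) ∤ m}`. -/
def Rset (k : ℕ) : Set ℕ := {m | 2 ^ k ∣ m ∧ ¬2 ^ (k + 1) ∣ m}

/-- `R(A) = ⋃_{n ∈ A} R_n`. -/
def RofSet (A : Set ℕ) : Set ℕ := ⋃ n ∈ A, Rset n

/-- Partial functions `ℕ →. ℕ` computable relative to a (total) oracle `O : ℕ → ℕ`. -/
inductive OracleRecursiveIn (O : ℕ → ℕ) : (ℕ →. ℕ) → Prop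
  | zero : OracleRecursiveIn O (pure 0)
  | succ : OracleRecursiveIn O fun n => Part.some (n + 1)
  | left : OracleRecursiveIn O fun n => Part.some (Nat.unpair n).1
  | right : OracleRecursiveIn O fun n => Part.some (Nat.unpair n).2
  | oracle : OracleRecursiveIn O fun n => Part.some (O n)
  | pair {f g : ℕ →. ℕ} : OracleRecursiveIn O f → OracleRecursiveIn O g →
      OracleRecursiveIn O fun n => Nat.pair <$> f n <*> g n
  | comp {f g : ℕ →. ℕ} : OracleRecursiveIn O f → OracleRecursiveIn O g →
      OracleRecursiveIn O fun n => g n >>= f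
  | prec {f g : ℕ →. ℕ} : OracleRecursiveIn O f → OracleRecursiveIn O g →
      OracleRecursiveIn O (Nat.unpaired fun a n =>
        n.rec (f a) fun y IH => do let i ← IH; g (Nat.pair a (Nat.pair y i)))
  | rfind {f : ℕ →. ℕ} : OracleRecursiveIn O f →
      OracleRecursiveIn O fun a => Nat.rfind fun n => (fun m => m = 0) <$> f (Nat.pair a n)

/-- `A ≤_T B`: the characteristic function of `A` is computable relative to `B`. -/
def SetTuringReducible (A B : Set ℕ) : Prop :=
  OracleRecursiveIn (charFun B) fun n => Part.some (charFun A n)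

/-- `A ≡_T B`. -/
def SetTuringEquivalent (A B : Set ℕ) : Prop :=
  SetTuringReducible A B ∧ SetTuringReducible B A

lemma hasDensity_congr {A B : Set ℕ} {r : ℝ} (h : A = B) (hA : HasDensity A r) :
    HasDensity B r := h ▸ hA

/-- `A` is generically computable iff `A` is densely approximable by
c.e. sets. -/
theorem stmt0 (A : Set ℕ) :
    GenericallyComputable A ↔
      ∃ C₀ C₁ : Set ℕ, CE C₀ ∧ CE C₁ ∧ C₀ ⊆ Aᶜ ∧ C₁ ⊆ A ∧ HasDensity (C₀ ∪ C₁) 1 := by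
  classical
  constructor
  · rintro ⟨Φ, hΦ, hval, hdens⟩
    set f₀ := fun x => Φ x >>= fun m => cond (decide (m = 0)) (Part.some 0) Part.none with hf₀
    set f₁ := fun x => Φ x >>= fun m => cond (decide (m = 1)) (Part.some 0) Part.none with hf₁
    have hpf : ∀ b, Partrec fun x => Φ x >>= fun m =>
        cond (decide (m = b)) (Part.some 0) Part.none := by
      intro b
      exact hΦ.bind (Partrec.cond
        ((Primrec₂.comp Primrec.eq.decide Primrec.snd (Primrec.const b)).to_comp)
        (Partrec.const' (Part.some 0)).to₂ Partrec.none.to₂).to₂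
    have hdom : ∀ b x, (Φ x >>= fun m =>
        cond (decide (m = b)) (Part.some 0) Part.none).Dom ↔ ∃ m ∈ Φ x, m = b := by
      intro b x
      constructor
      · intro h
        obtain ⟨y, hy⟩ := Part.dom_iff_mem.1 h
        obtain ⟨m, hm, hy'⟩ := Part.mem_bind_iff.1 hy
        refine ⟨m, hm, ?_⟩
        by_contra hne
        simp [hne] at hy'
      · rintro ⟨m, hm, rfl⟩
        exact Part.dom_iff_mem.2 ⟨0, Part.mem_bind_iff.2 ⟨m, hm, by simp⟩⟩
    refine ⟨{x | (f₀ x).Dom}, {x | (f₁ x).Dom}, ⟨f₀, hpf 0, rfl⟩, ⟨f₁, hpf 1, rfl⟩,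
      ?_, ?_, ?_⟩
    · intro x hx
      obtain ⟨m, hm, rfl⟩ := (hdom 0 x).1 hx
      have := hval x _ hm
      simp only [charFun] at this
      intro hxA
      simp [hxA] at this
    · intro x hx
      obtain ⟨m, hm, rfl⟩ := (hdom 1 x).1 hx
      have := hval x _ hm
      simp only [charFun] at this
      by_contra hxA
      simp [hxA] at this
    · refine hasDensity_congr ?_ hdens
      ext x
      simp only [Set.mem_setOf_eq, Set.mem_union]
      constructor
      · intro h
        obtain ⟨m, hm⟩ := Part.dom_iff_mem.1 h
        have := hval x _ hm
        by_cases hxA : x ∈ A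
        · right; exact (hdom 1 x).2 ⟨m, hm, by simpa [charFun, hxA] using this⟩
        · left; exact (hdom 0 x).2 ⟨m, hm, by simpa [charFun, hxA] using this⟩
      · rintro (h | h)
        · obtain ⟨m, hm, -⟩ := (hdom 0 x).1 h
          exact Part.dom_iff_mem.2 ⟨m, hm⟩
        · obtain ⟨m, hm, -⟩ := (hdom 1 x).1 h
          exact Part.dom_iff_mem.2 ⟨m, hm⟩
  · rintro ⟨C₀, C₁, ⟨f₀, hf₀, hC₀⟩, ⟨f₁, hf₁, hC₁⟩, h₀, h₁, hdens⟩
    have hdisj : ∀ x, x ∈ C₀ → x ∈ C₁ → False := fun x hx0 hx1 => h₀ hx0 (h₁ hx1)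
    set g₀ : ℕ →. ℕ := fun x => (f₀ x).map fun _ => 0 with hg₀
    set g₁ : ℕ →. ℕ := fun x => (f₁ x).map fun _ => 1 with hg₁
    have hpg₀ : Partrec g₀ := hf₀.map (Computable.const 0).to₂
    have hpg₁ : Partrec g₁ := hf₁.map (Computable.const 1).to₂
    have hcons : ∀ x, ∀ a ∈ g₀ x, ∀ b ∈ g₁ x, a = b := by
      rintro x a ha b hb
      exfalso
      apply hdisj x
      · rw [hC₀]; exact Part.dom_iff_mem.2 ⟨_, (Part.mem_map_iff _).1 ha |>.choose_spec.1⟩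
      · rw [hC₁]; exact Part.dom_iff_mem.2 ⟨_, (Part.mem_map_iff _).1 hb |>.choose_spec.1⟩
    obtain ⟨k, hk, hkspec⟩ := Partrec.merge hpg₀ hpg₁ hcons
    refine ⟨k, hk, ?_, ?_⟩
    · intro x m hm
      rcases (hkspec x m).1 hm with h | h
      · obtain ⟨y, hy, rfl⟩ := (Part.mem_map_iff _).1 h
        have hx0 : x ∈ C₀ := by rw [hC₀]; exact Part.dom_iff_mem.2 ⟨_, hy⟩
        have := h₀ hx0
        simp [charFun, show x ∉ A from this]
      · obtain ⟨y, hy, rfl⟩ := (Part.mem_map_iff _).1 h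
        have hx1 : x ∈ C₁ := by rw [hC₁]; exact Part.dom_iff_mem.2 ⟨_, hy⟩
        have := h₁ hx1
        simp [charFun, this]
    · refine hasDensity_congr ?_ hdens
      ext x
      simp only [Set.mem_union, Set.mem_setOf_eq]
      constructor
      · rintro (hx | hx)
        · rw [hC₀] at hx
          obtain ⟨y, hy⟩ := Part.dom_iff_mem.1 hx
          exact Part.dom_iff_mem.2 ⟨0, (hkspec x 0).2 (Or.inl ((Part.mem_map_iff _).2 ⟨y, hy, rfl⟩))⟩
        · rw [hC₁] at hx
          obtain ⟨y, hy⟩ := Part.dom_iff_mem.1 hx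
          exact Part.dom_iff_mem.2 ⟨1, (hkspec x 1).2 (Or.inr ((Part.mem_map_iff _).2 ⟨y, hy, rfl⟩))⟩
      · intro hx
        obtain ⟨m, hm⟩ := Part.dom_iff_mem.1 hx
        rcases (hkspec x m).1 hm with h | h
        · obtain ⟨y, hy, _⟩ := (Part.mem_map_iff _).1 h
          left; rw [hC₀]; exact Part.dom_iff_mem.2 ⟨_, hy⟩
        · obtain ⟨y, hy, _⟩ := (Part.mem_map_iff _).1 h
          right; rw [hC₁]; exact Part.dom_iff_mem.2 ⟨_, hy⟩
end

section
/- No bi-immune subset of ℕ is generically computable. -/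
open Filter

/-- Partial functions `ℕ →. ℕ` computable relative to a (total) oracle `O : ℕ → ℕ`. -/
inductive RecursiveInOracle (O : ℕ → ℕ) : (ℕ →. ℕ) → Prop
  | zero : RecursiveInOracle O (pure 0)
  | succ : RecursiveInOracle O fun n => Part.some (n + 1)
  | left : RecursiveInOracle O fun n => Part.some (Nat.unpair n).1
  | right : RecursiveInOracle O fun n => Part.some (Nat.unpair n).2
  | oracle : RecursiveInOracle O fun n => Part.some (O n)
  | pair {f g : ℕ →. ℕ} : RecursiveInOracle O f → RecursiveInOracle O g →
      RecursiveInOracle O fun n => Nat.pair <$> f n <*> g n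
  | comp {f g : ℕ →. ℕ} : RecursiveInOracle O f → RecursiveInOracle O g →
      RecursiveInOracle O fun n => g n >>= f
  | prec {f g : ℕ →. ℕ} : RecursiveInOracle O f → RecursiveInOracle O g →
      RecursiveInOracle O (Nat.unpaired fun a n =>
        n.rec (f a) fun y IH => do let i ← IH; g (Nat.pair a (Nat.pair y i)))
  | rfind {f : ℕ →. ℕ} : RecursiveInOracle O f →
      RecursiveInOracle O fun a => Nat.rfind fun n => (fun m => m = 0) <$> f (Nat.pair a n)

/-- `A ≤_T B`: the characteristic function of `A` is computable relative to `B`. -/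
def TuringReducibleSet (A B : Set ℕ) : Prop :=
  RecursiveInOracle (charFun B) fun n => Part.some (charFun A n)

/-- `A ≡_T B`. -/
def TuringEquivalentSet (A B : Set ℕ) : Prop :=
  TuringReducibleSet A B ∧ TuringReducibleSet B A


private lemma ce_level (Φ : ℕ →. ℕ) (hΦ : Partrec Φ) (k : ℕ) : CE {x | k ∈ Φ x} := by
  classical
  refine ⟨fun x => (Φ x).bind fun m => Part.ofOption (if m = k then some 0 else none), ?_, ?_⟩
  · apply hΦ.bind
    have hp : Primrec (fun p : ℕ × ℕ => if p.2 = k then some 0 else (none : Option ℕ)) :=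
      Primrec.ite (Primrec.eq.comp Primrec.snd (Primrec.const k))
        (Primrec.const _) (Primrec.const _)
    exact hp.to_comp.ofOption
  · ext x
    simp only [Set.mem_setOf_eq, Part.bind_dom]
    constructor
    · intro hk
      refine ⟨hk.1, ?_⟩
      have : (Φ x).get hk.1 = k := Part.get_eq_of_mem hk _
      simp [this]
    · rintro ⟨hd, hif⟩
      by_cases hc : (Φ x).get hd = k
      · exact hc ▸ Part.get_mem hd
      · simp [hc] at hif

private lemma infinite_of_density_one {D : Set ℕ} (h : HasDensity D 1) : D.Infinite := by
  classical
  by_contra hfin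
  rw [Set.not_infinite] at hfin
  have h0 : Filter.Tendsto (partialDensity D) Filter.atTop (nhds 0) := by
    refine squeeze_zero (f := partialDensity D) (g := fun n => (hfin.toFinset.card : ℝ) / (n + 1))
      (fun n => by unfold partialDensity; positivity) ?_ ?_
    · intro n
      unfold partialDensity
      apply div_le_div_of_nonneg_right ?_ (by positivity)
      · exact_mod_cast Finset.card_le_card fun x hx => by
          simp only [Finset.mem_filter] at hx
          exact hfin.mem_toFinset.mpr hx.2
    · have := (tendsto_const_div_atTop_nhds_zero_nat (hfin.toFinset.card : ℝ)).comp
        (Filter.tendsto_add_atTop_nat 1)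
      convert this using 2 with n
      simp only [Function.comp_apply]
      push_cast
      ring
  exact one_ne_zero (tendsto_nhds_unique h h0)

/-- no bi-immune set is generically computable. -/
theorem stmt2 (A : Set ℕ) (h : BiImmune A) : ¬GenericallyComputable A := by
  rintro ⟨Φ, hΦ, hdesc, hdens⟩
  set D : Set ℕ := {x | (Φ x).Dom} with hD
  have hDinf : D.Infinite := infinite_of_density_one hdens
  set W1 : Set ℕ := {x | 1 ∈ Φ x}
  set W0 : Set ℕ := {x | 0 ∈ Φ x}
  have hsub : D ⊆ W0 ∪ W1 := by
    intro x hx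
    have hm : (Φ x).get hx ∈ Φ x := Part.get_mem hx
    have := hdesc x _ hm
    unfold charFun at this
    by_cases hxa : x ∈ A
    · right; simp only [hxa, if_pos] at this; exact show (1:ℕ) ∈ Φ x from this ▸ hm
    · left; simp only [hxa, if_neg, if_false] at this; exact show (0:ℕ) ∈ Φ x from this ▸ hm
  have hW1A : W1 ⊆ A := by
    intro x hx
    have := hdesc x 1 hx
    unfold charFun at this
    by_contra hxa
    simp [hxa] at this
  have hW0A : W0 ⊆ Aᶜ := by
    intro x hx
    have := hdesc x 0 hx
    unfold charFun at this
    intro hxa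
    simp [hxa] at this
  rcases (Set.infinite_union.mp (hDinf.mono hsub)) with h0 | h1
  · exact h.2.2 W0 (ce_level Φ hΦ 0) h0 hW0A
  · exact h.1.2 W1 (ce_level Φ hΦ 1) h1 hW1A
end

section
/- Restricted countable additivity of density: if S₀, S₁, S₂, … are pairwise disjoint subsets of ℕ such that each density ρ(S_i) exists and the upper density of ⋃_{i ≥ N} S_i tends to 0 as N → ∞, then the density of ⋃_{i=0}^{∞} S_i exists and equals Σ_{i=0}^{∞} ρ(S_i). -/
open Filter

open scoped Classical in
lemma pd_nonneg (A : Set ℕ) (n : ℕ) : 0 ≤ partialDensity A n := by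
  unfold partialDensity; positivity

open scoped Classical in
lemma pd_le_one (A : Set ℕ) (n : ℕ) : partialDensity A n ≤ 1 := by
  unfold partialDensity
  rw [div_le_one (by positivity)]
  have h := Finset.card_filter_le (Finset.range (n + 1)) (· ∈ A)
  have : (((Finset.range (n + 1)).filter (· ∈ A)).card : ℝ) ≤ (n + 1 : ℕ) := by
    exact_mod_cast le_trans h (le_of_eq (Finset.card_range (n + 1)))
  simpa using this

open scoped Classical in
lemma pd_union {A B : Set ℕ} (h : Disjoint A B) (n : ℕ) :
    partialDensity (A ∪ B) n = partialDensity A n + partialDensity B n := by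
  unfold partialDensity
  rw [← add_div]
  congr 1
  rw [← Nat.cast_add]
  congr 1
  have hd : Disjoint ((Finset.range (n + 1)).filter (· ∈ A))
      ((Finset.range (n + 1)).filter (· ∈ B)) := by
    rw [Finset.disjoint_left]
    intro x hx hx'
    simp only [Finset.mem_filter] at hx hx'
    exact Set.disjoint_left.1 h hx.2 hx'.2
  rw [← Finset.card_union_of_disjoint hd]
  congr 1
  ext x
  simp only [Finset.mem_filter, Finset.mem_union, Set.mem_union]
  tauto

open scoped Classical in
lemma pd_sum (S : ℕ → Set ℕ) (hdisj : Pairwise fun i j => Disjoint (S i) (S j))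
    (s : Finset ℕ) (n : ℕ) :
    partialDensity (⋃ i ∈ s, S i) n = ∑ i ∈ s, partialDensity (S i) n := by
  induction s using Finset.induction_on with
  | empty =>
      simp only [Finset.sum_empty]
      have : (⋃ i ∈ (∅ : Finset ℕ), S i) = (∅ : Set ℕ) := by simp
      rw [this]
      unfold partialDensity
      simp
  | @insert a s ha ih =>
      rw [Finset.sum_insert ha, ← ih]
      have hU : (⋃ i ∈ insert a s, S i) = S a ∪ ⋃ i ∈ s, S i := by
        simp [Set.biUnion_insert]
      have hd : Disjoint (S a) (⋃ i ∈ s, S i) := by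
        apply Set.disjoint_iUnion₂_right.2
        intro i hi
        exact hdisj (fun h => ha (h ▸ hi))
      rw [hU, pd_union hd]

/-- restricted countable additivity of asymptotic density. -/
theorem stmt3 (S : ℕ → Set ℕ) (d : ℕ → ℝ)
    (hdisj : Pairwise fun i j => Disjoint (S i) (S j))
    (hdens : ∀ i, HasDensity (S i) (d i))
    (htail : Filter.Tendsto (fun N => upperDensity (⋃ i ∈ Set.Ici N, S i))
      Filter.atTop (nhds 0)) :
    HasDensity (⋃ i, S i) (∑' i, d i) := by
  have hd0 : ∀ i, 0 ≤ d i := fun i => ge_of_tendsto' (hdens i) (pd_nonneg _)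
  have hsum_tendsto : ∀ N : ℕ,
      Tendsto (fun n => ∑ i ∈ Finset.range N, partialDensity (S i) n) atTop
        (nhds (∑ i ∈ Finset.range N, d i)) :=
    fun N => tendsto_finset_sum _ fun i _ => hdens i
  have hpart_le : ∀ N, ∑ i ∈ Finset.range N, d i ≤ 1 := fun N =>
    le_of_tendsto' (hsum_tendsto N) fun n => by
      rw [← pd_sum S hdisj]; exact pd_le_one _ _
  have hsummable : Summable d := summable_of_sum_range_le hd0 hpart_le
  have htsum : Tendsto (fun N => ∑ i ∈ Finset.range N, d i) atTop (nhds (∑' i, d i)) :=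
    hsummable.hasSum.tendsto_sum_nat
  rw [HasDensity, Metric.tendsto_atTop]
  intro ε hε
  have hε3 : 0 < ε / 3 := by linarith
  -- choose N with small tail upper density and partial sum close to the tsum
  have h1 : ∀ᶠ N in atTop, upperDensity (⋃ i ∈ Set.Ici N, S i) < ε / 3 :=
    htail.eventually (eventually_lt_nhds hε3)
  have h2 : ∀ᶠ N in atTop, dist (∑ i ∈ Finset.range N, d i) (∑' i, d i) < ε / 3 :=
    htsum.eventually (Metric.ball_mem_nhds _ hε3)
  obtain ⟨N, hN1, hN2⟩ := (h1.and h2).exists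
  set T : Set ℕ := ⋃ i ∈ Set.Ici N, S i with hT
  have hdisjNT : Disjoint (⋃ i ∈ Finset.range N, S i) T := by
    rw [Set.disjoint_left]
    intro x hx hx'
    simp only [Set.mem_iUnion, Finset.mem_range, Set.mem_Ici, hT] at hx hx'
    obtain ⟨i, hi, hxi⟩ := hx
    obtain ⟨j, hj, hxj⟩ := hx'
    have hij : i ≠ j := by omega
    exact Set.disjoint_left.1 (hdisj hij) hxi hxj
  have hdecomp : ∀ n, partialDensity (⋃ i, S i) n
      = ∑ i ∈ Finset.range N, partialDensity (S i) n + partialDensity T n := by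
    intro n
    rw [← pd_sum S hdisj, ← pd_union hdisjNT]
    congr 1
    ext x
    simp only [Set.mem_iUnion, Set.mem_union, Finset.mem_range, Set.mem_Ici, hT]
    constructor
    · rintro ⟨i, hi⟩
      rcases lt_or_ge i N with h | h
      exacts [Or.inl ⟨i, h, hi⟩, Or.inr ⟨i, h, hi⟩]
    · rintro (⟨i, _, hi⟩ | ⟨i, _, hi⟩) <;> exact ⟨i, hi⟩
  have hbdd : IsBoundedUnder (· ≤ ·) atTop (partialDensity T) :=
    isBoundedUnder_of ⟨1, fun n => pd_le_one _ n⟩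
  have hTsmall : ∀ᶠ n in atTop, partialDensity T n < ε / 3 :=
    eventually_lt_of_limsup_lt hN1 hbdd
  have hA : ∀ᶠ n in atTop,
      dist (∑ i ∈ Finset.range N, partialDensity (S i) n) (∑ i ∈ Finset.range N, d i) < ε / 3 :=
    (hsum_tendsto N).eventually (Metric.ball_mem_nhds _ hε3)
  obtain ⟨M, hM⟩ := (hA.and hTsmall).exists_forall_of_atTop
  refine ⟨M, fun n hn => ?_⟩
  obtain ⟨hAn, hTn⟩ := hM n hn
  rw [Real.dist_eq] at hAn hN2 ⊢
  have hTpos := pd_nonneg T n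
  rw [hdecomp n, abs_lt]
  rw [abs_lt] at hAn hN2
  constructor <;> linarith [hAn.1, hAn.2, hN2.1, hN2.2]
end

section
/- For every A ⊆ ℕ, the density of R(A) exists and ρ(R(A)) = Σ_{n ∈ A} 2^{-(n+1)}. -/
open Filter

/-- Partial functions `ℕ →. ℕ` computable relative to a (total) oracle `O : ℕ → ℕ`. -/
inductive RecursiveIn' (O : ℕ → ℕ) : (ℕ →. ℕ) → Prop
  | zero : RecursiveIn' O (pure 0)
  | succ : RecursiveIn' O fun n => Part.some (n + 1)
  | left : RecursiveIn' O fun n => Part.some (Nat.unpair n).1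
  | right : RecursiveIn' O fun n => Part.some (Nat.unpair n).2
  | oracle : RecursiveIn' O fun n => Part.some (O n)
  | pair {f g : ℕ →. ℕ} : RecursiveIn' O f → RecursiveIn' O g →
      RecursiveIn' O fun n => Nat.pair <$> f n <*> g n
  | comp {f g : ℕ →. ℕ} : RecursiveIn' O f → RecursiveIn' O g →
      RecursiveIn' O fun n => g n >>= f
  | prec {f g : ℕ →. ℕ} : RecursiveIn' O f → RecursiveIn' O g →
      RecursiveIn' O (Nat.unpaired fun a n =>
        n.rec (f a) fun y IH => do let i ← IH; g (Nat.pair a (Nat.pair y i)))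
  | rfind {f : ℕ →. ℕ} : RecursiveIn' O f →
      RecursiveIn' O fun a => Nat.rfind fun n => (fun m => m = 0) <$> f (Nat.pair a n)

/-- `A ≤_T B`: the characteristic function of `A` is computable relative to `B`. -/
def TuringReducible' (A B : Set ℕ) : Prop :=
  RecursiveIn' (charFun B) fun n => Part.some (charFun A n)

/-- `A ≡_T B`. -/
def TuringEquivalent' (A B : Set ℕ) : Prop :=
  TuringReducible' A B ∧ TuringReducible' B A

section AuxStmt4
open scoped Classical

lemma card_Rset (k n : ℕ) :
    ((Finset.range (n+1)).filter (· ∈ Rset k)).card = n / 2^k - n / 2^(k+1) := by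
  have hsub : (Finset.Ioc 0 n).filter (fun x => 2^(k+1) ∣ x)
      ⊆ (Finset.Ioc 0 n).filter (fun x => 2^k ∣ x) :=
    Finset.monotone_filter_right _ (fun x _ hx => dvd_trans (pow_dvd_pow 2 (Nat.le_succ k)) hx)
  have heq : (Finset.range (n+1)).filter (· ∈ Rset k)
      = (Finset.Ioc 0 n).filter (fun x => 2^k ∣ x) \ (Finset.Ioc 0 n).filter (fun x => 2^(k+1) ∣ x) := by
    ext m
    simp only [Finset.mem_filter, Finset.mem_range, Finset.mem_sdiff, Finset.mem_Ioc, Rset,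
      Set.mem_setOf_eq, Nat.lt_succ_iff]
    constructor
    · rintro ⟨hm, hd, hnd⟩
      have hm0 : 0 < m := by
        rcases Nat.eq_zero_or_pos m with rfl | h
        · exact absurd (dvd_zero _) hnd
        · exact h
      exact ⟨⟨⟨hm0, hm⟩, hd⟩, fun h => hnd h.2⟩
    · rintro ⟨⟨⟨h0, hm⟩, hd⟩, hnd⟩
      exact ⟨hm, hd, fun h => hnd ⟨⟨h0, hm⟩, h⟩⟩
  rw [heq, Finset.card_sdiff_of_subset hsub, Nat.Ioc_filter_dvd_card_eq_div, Nat.Ioc_filter_dvd_card_eq_div]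

lemma Rset_disj {i j m : ℕ} (h : i < j) (hi : m ∈ Rset i) (hj : m ∈ Rset j) : False :=
  hi.2 (dvd_trans (pow_dvd_pow 2 h) hj.1)

lemma count_eq (A : Set ℕ) (n : ℕ) :
    ((Finset.range (n+1)).filter (· ∈ RofSet A)).card
      = ∑ k ∈ (Finset.range (n+1)).filter (· ∈ A), (n / 2^k - n / 2^(k+1)) := by
  have hU : (Finset.range (n+1)).filter (· ∈ RofSet A)
      = ((Finset.range (n+1)).filter (· ∈ A)).biUnion
          (fun k => (Finset.range (n+1)).filter (· ∈ Rset k)) := by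
    ext m
    simp only [Finset.mem_filter, Finset.mem_biUnion, Finset.mem_range, RofSet, Set.mem_iUnion]
    constructor
    · rintro ⟨hm, k, hk, hmk⟩
      have hm0 : m ≠ 0 := fun h => hmk.2 (h ▸ dvd_zero _)
      have h2k : 2^k ≤ m := Nat.le_of_dvd (Nat.pos_of_ne_zero hm0) hmk.1
      exact ⟨k, ⟨lt_trans (lt_of_lt_of_le (Nat.lt_two_pow_self (n := k)) h2k) hm, hk⟩, hm, hmk⟩
    · rintro ⟨k, ⟨_, hk⟩, hm, hmk⟩
      exact ⟨hm, k, hk, hmk⟩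
  rw [hU, Finset.card_biUnion]
  · exact Finset.sum_congr rfl fun k _ => card_Rset k n
  · intro i hi j hj hij
    rw [Function.onFun, Finset.disjoint_left]
    rintro m hmi hmj
    have h1 := (Finset.mem_filter.mp hmi).2
    have h2 := (Finset.mem_filter.mp hmj).2
    rcases lt_or_gt_of_ne hij with h | h
    · exact Rset_disj h h1 h2
    · exact Rset_disj h h2 h1

lemma nat_div_mono (n k : ℕ) : n / 2^(k+1) ≤ n / 2^k :=
  Nat.div_le_div_left (Nat.pow_le_pow_right (by norm_num) (Nat.le_succ k)) (Nat.two_pow_pos k)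

lemma density_eq (A : Set ℕ) (n : ℕ) :
    partialDensity (RofSet A) n
      = (∑ k ∈ (Finset.range (n+1)).filter (· ∈ A),
          (((n / 2^k : ℕ) : ℝ) - ((n / 2^(k+1) : ℕ) : ℝ))) / (n+1) := by
  unfold partialDensity
  rw [count_eq]
  congr 1
  rw [Nat.cast_sum]
  exact Finset.sum_congr rfl fun k _ => by
    rw [Nat.cast_sub (nat_div_mono n k)]

lemma cast_div_lb (m d : ℕ) (hd : 0 < d) : (m:ℝ)/d - 1 < ((m/d : ℕ) : ℝ) := by
  have hd' : (0:ℝ) < d := by exact_mod_cast hd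
  rw [sub_lt_iff_lt_add, div_lt_iff₀ hd']
  have h1 : m < d * (m / d) + d := by
    conv_lhs => rw [← Nat.div_add_mod m d]
    exact Nat.add_lt_add_left (Nat.mod_lt m hd) _
  have : (m:ℝ) < (d:ℝ) * ((m/d : ℕ):ℝ) + d := by exact_mod_cast h1
  linarith

lemma term_bounds (n k : ℕ) :
    ((n:ℝ)+1) * (1/2)^(k+1) - 2 ≤ ((n / 2^k : ℕ):ℝ) - ((n / 2^(k+1) : ℕ):ℝ) ∧
    ((n / 2^k : ℕ):ℝ) - ((n / 2^(k+1) : ℕ):ℝ) ≤ ((n:ℝ)+1) * (1/2)^(k+1) + 1 := by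
  have hx : (0:ℝ) < 2^k := by positivity
  have h1 : ((n / 2^k : ℕ):ℝ) ≤ (n:ℝ) / 2^k := by
    have := Nat.cast_div_le (m := n) (n := 2^k) (α := ℝ)
    push_cast at this; exact this
  have h2 : (n:ℝ) / 2^k - 1 < ((n / 2^k : ℕ):ℝ) := by
    have := cast_div_lb n (2^k) (Nat.two_pow_pos k)
    push_cast at this ⊢; exact this
  have h3 : ((n / 2^(k+1) : ℕ):ℝ) ≤ (n:ℝ) / 2^(k+1) := by
    have := Nat.cast_div_le (m := n) (n := 2^(k+1)) (α := ℝ)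
    push_cast at this; exact this
  have h4 : (n:ℝ) / 2^(k+1) - 1 < ((n / 2^(k+1) : ℕ):ℝ) := by
    have := cast_div_lb n (2^(k+1)) (Nat.two_pow_pos (k+1))
    push_cast at this ⊢; exact this
  have hpow : ((1:ℝ)/2)^(k+1) = 1 / (2 * 2^k) := by
    rw [div_pow, one_pow, pow_succ]; ring
  have hle1 : ((1:ℝ)/2)^(k+1) ≤ 1 := by
    apply pow_le_one₀ <;> norm_num
  have hkey : (n:ℝ)/2^k - (n:ℝ)/2^(k+1) = (n:ℝ) * ((1:ℝ)/2)^(k+1) := by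
    rw [hpow, pow_succ]
    field_simp
    ring
  have hge0 : (0:ℝ) ≤ ((1:ℝ)/2)^(k+1) := by positivity
  constructor <;> nlinarith [hkey, hle1, hge0, h1, h2, h3, h4]


lemma summable_g (A : Set ℕ) : Summable (A.indicator fun k => ((1:ℝ)/2)^(k+1)) := by
  apply Summable.indicator
  have h : Summable (fun k : ℕ => ((1:ℝ)/2) * ((1:ℝ)/2)^k) :=
    (summable_geometric_of_lt_one (by norm_num) (by norm_num)).mul_left _
  exact h.congr fun k => by rw [pow_succ]; ring

lemma shifted_geom (N : ℕ) : ∑' i : ℕ, ((1:ℝ)/2)^(i+(N+1)+1) = ((1:ℝ)/2)^(N+1) := by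
  calc ∑' i : ℕ, ((1:ℝ)/2)^(i+(N+1)+1)
      = ∑' i : ℕ, ((1:ℝ)/2)^(N+2) * ((1:ℝ)/2)^i := by
        refine tsum_congr fun i => ?_
        rw [← pow_add]; ring_nf
    _ = ((1:ℝ)/2)^(N+2) * ∑' i : ℕ, ((1:ℝ)/2)^i := tsum_mul_left
    _ = ((1:ℝ)/2)^(N+2) * 2 := by
        rw [tsum_geometric_of_lt_one (by norm_num) (by norm_num)]; norm_num
    _ = ((1:ℝ)/2)^(N+1) := by rw [pow_succ]; ring

lemma tsum_tail_bound (A : Set ℕ) (N : ℕ) :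
    ∑' k : ℕ, (A.indicator fun k => ((1:ℝ)/2)^(k+1)) k
      ≤ (∑ k ∈ Finset.range (N+1), (A.indicator fun k => ((1:ℝ)/2)^(k+1)) k) + ((1:ℝ)/2)^(N+1) := by
  rw [← Summable.sum_add_tsum_nat_add (N+1) (summable_g A)]
  have hsum2 : Summable (fun i : ℕ => ((1:ℝ)/2)^(i+(N+1)+1)) := by
    have h : Summable (fun i : ℕ => ((1:ℝ)/2)^(N+2) * ((1:ℝ)/2)^i) :=
      (summable_geometric_of_lt_one (by norm_num) (by norm_num)).mul_left _
    exact h.congr fun i => by rw [← pow_add]; ring_nf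
  have h1 : ∑' i : ℕ, (A.indicator fun k => ((1:ℝ)/2)^(k+1)) (i+(N+1))
      ≤ ∑' i : ℕ, ((1:ℝ)/2)^(i+(N+1)+1) := by
    refine Summable.tsum_le_tsum (fun i => ?_) ((summable_g A).comp_injective (add_left_injective (N+1))) hsum2
    exact Set.indicator_le_self' (fun x _ => by positivity) _
  have := shifted_geom N
  linarith

lemma sum_range_ind (A : Set ℕ) (N : ℕ) :
    ∑ k ∈ Finset.range (N+1), (A.indicator fun k => ((1:ℝ)/2)^(k+1)) k
      = ∑ k ∈ (Finset.range (N+1)).filter (· ∈ A), ((1:ℝ)/2)^(k+1) := by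
  rw [Finset.sum_filter]
  exact Finset.sum_congr rfl fun k _ => by rw [Set.indicator_apply]

end AuxStmt4

open scoped Classical in

/-- `ρ(R(A)) = Σ_{n ∈ A} 2^{-(n+1)}`. -/
theorem stmt4 (A : Set ℕ) :
    HasDensity (RofSet A) (∑' n : A, ((1 : ℝ) / 2) ^ ((n : ℕ) + 1)) := by
  classical
  have hSeq : (∑' n : A, ((1:ℝ)/2)^((n:ℕ)+1))
      = ∑' k : ℕ, (A.indicator fun k => ((1:ℝ)/2)^(k+1)) k := tsum_subtype A (fun k => ((1:ℝ)/2)^(k+1))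
  rw [HasDensity, hSeq]
  set S := ∑' k : ℕ, (A.indicator fun k => ((1:ℝ)/2)^(k+1)) k with hS
  rw [Metric.tendsto_atTop]
  intro ε hε
  obtain ⟨N, hN⟩ := exists_pow_lt_of_lt_one (half_pos hε) (by norm_num : (1:ℝ)/2 < 1)
  have hP : ((1:ℝ)/2)^(N+1) < ε/2 :=
    lt_of_le_of_lt (pow_le_pow_of_le_one (by norm_num) (by norm_num) (Nat.le_succ N)) hN
  obtain ⟨n₀, hn₀⟩ := exists_nat_gt (4*((N:ℝ)+1)/ε)
  refine ⟨max n₀ N, fun n hn => ?_⟩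
  have hnN : N ≤ n := le_trans (le_max_right _ _) hn
  have hn0 : (n₀ : ℝ) ≤ n := by exact_mod_cast le_trans (le_max_left _ _) hn
  have hn1 : (0:ℝ) < (n:ℝ)+1 := by positivity
  have hnum : 2*((N:ℝ)+1) < ε/2*((n:ℝ)+1) := by
    have h4 : 4*((N:ℝ)+1)/ε < (n:ℝ)+1 := by linarith
    rw [div_lt_iff₀ hε] at h4
    nlinarith
  set F := (Finset.range (N+1)).filter (· ∈ A) with hF
  set Fn := (Finset.range (n+1)).filter (· ∈ A) with hFn
  set t : ℕ → ℝ := fun k => ((n / 2^k : ℕ):ℝ) - ((n / 2^(k+1) : ℕ):ℝ) with ht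
  have ht0 : ∀ k, 0 ≤ t k := fun k => sub_nonneg.2 (by exact_mod_cast nat_div_mono n k)
  set SF := ∑ k ∈ F, ((1:ℝ)/2)^(k+1) with hSF
  have hcardF : (F.card : ℝ) ≤ (N:ℝ)+1 := by
    have h := Finset.card_filter_le (Finset.range (N+1)) (· ∈ A)
    rw [Finset.card_range] at h; exact_mod_cast h
  have hρ : partialDensity (RofSet A) n = (∑ k ∈ Fn, t k) / ((n:ℝ)+1) := density_eq A n
  -- lower bound
  have hFsub : F ⊆ Fn :=
    Finset.filter_subset_filter _ (Finset.range_subset_range.2 (by omega))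
  have hlow1 : ∑ k ∈ F, t k ≤ ∑ k ∈ Fn, t k :=
    Finset.sum_le_sum_of_subset_of_nonneg hFsub (fun k _ _ => ht0 k)
  have hlow2 : ((n:ℝ)+1) * SF - 2*((N:ℝ)+1) ≤ ∑ k ∈ F, t k := by
    have h := Finset.sum_le_sum (fun k (_ : k ∈ F) => (term_bounds n k).1)
    rw [Finset.sum_sub_distrib, ← Finset.mul_sum, Finset.sum_const, nsmul_eq_mul] at h
    nlinarith [hcardF]
  -- upper bound
  have hdisj : Disjoint F (Finset.Ico (N+1) (n+1)) := by
    rw [Finset.disjoint_left]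
    intro k hk hk'
    rw [hF, Finset.mem_filter, Finset.mem_range] at hk
    rw [Finset.mem_Ico] at hk'
    omega
  have hup1 : ∑ k ∈ Fn, t k ≤ ∑ k ∈ F, t k + ∑ k ∈ Finset.Ico (N+1) (n+1), t k := by
    have hsub : Fn ⊆ F ∪ Finset.Ico (N+1) (n+1) := by
      intro k hk
      rw [hFn, Finset.mem_filter, Finset.mem_range] at hk
      rw [Finset.mem_union, hF, Finset.mem_filter, Finset.mem_range, Finset.mem_Ico]
      rcases Nat.lt_or_ge k (N+1) with h | h
      · exact Or.inl ⟨h, hk.2⟩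
      · exact Or.inr ⟨h, hk.1⟩
    calc ∑ k ∈ Fn, t k ≤ ∑ k ∈ F ∪ Finset.Ico (N+1) (n+1), t k :=
          Finset.sum_le_sum_of_subset_of_nonneg hsub (fun k _ _ => ht0 k)
      _ = ∑ k ∈ F, t k + ∑ k ∈ Finset.Ico (N+1) (n+1), t k := Finset.sum_union hdisj
  have htel : ∑ k ∈ Finset.Ico (N+1) (n+1), t k ≤ ((n:ℝ)+1) * ((1:ℝ)/2)^(N+1) := by
    have heq : ∑ k ∈ Finset.Ico (N+1) (n+1), t k
        = ((n / 2^(N+1) : ℕ):ℝ) - ((n / 2^(n+1) : ℕ):ℝ) := by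
      rw [Finset.sum_Ico_eq_sub _ (by omega : N+1 ≤ n+1)]
      rw [show t = fun k => ((n / 2^k : ℕ):ℝ) - ((n / 2^(k+1) : ℕ):ℝ) from rfl]
      rw [Finset.sum_range_sub' (fun k => ((n / 2^k : ℕ):ℝ)),
          Finset.sum_range_sub' (fun k => ((n / 2^k : ℕ):ℝ))]
      ring
    rw [heq]
    have h1 : ((n / 2^(N+1) : ℕ):ℝ) ≤ (n:ℝ) / 2^(N+1) := by
      have h := Nat.cast_div_le (m := n) (n := 2^(N+1)) (α := ℝ)
      push_cast at h; exact h
    have h2 : (0:ℝ) ≤ ((n / 2^(n+1) : ℕ):ℝ) := by positivity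
    have h3 : (n:ℝ) / 2^(N+1) = (n:ℝ) * ((1:ℝ)/2)^(N+1) := by
      rw [div_pow, one_pow]; field_simp
    have h4 : (0:ℝ) ≤ ((1:ℝ)/2)^(N+1) := by positivity
    nlinarith
  have hup2 : ∑ k ∈ F, t k ≤ ((n:ℝ)+1) * SF + ((N:ℝ)+1) := by
    have h := Finset.sum_le_sum (fun k (_ : k ∈ F) => (term_bounds n k).2)
    rw [Finset.sum_add_distrib, ← Finset.mul_sum, Finset.sum_const, nsmul_eq_mul, mul_one] at h
    linarith [hcardF]
  -- S bounds
  have hrange : ∑ k ∈ Finset.range (N+1), (A.indicator fun k => ((1:ℝ)/2)^(k+1)) k = SF := by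
    rw [hSF, hF, sum_range_ind]
  have hSlow : SF ≤ S := by
    have h := Summable.sum_le_tsum (Finset.range (N+1))
      (fun k _ => Set.indicator_nonneg (fun x _ => by positivity) k) (summable_g A)
    rw [hrange] at h; exact h
  have hShigh : S ≤ SF + ((1:ℝ)/2)^(N+1) := by
    have h := tsum_tail_bound A N
    rw [hrange] at h; exact h
  -- finish
  rw [hρ, Real.dist_eq, abs_sub_lt_iff]
  have m1 : ((n:ℝ)+1)*SF ≤ ((n:ℝ)+1)*S := mul_le_mul_of_nonneg_left hSlow hn1.le
  have m2 : ((n:ℝ)+1)*((1:ℝ)/2)^(N+1) < ((n:ℝ)+1)*(ε/2) := by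
    exact mul_lt_mul_of_pos_left hP hn1
  have m3 : ((n:ℝ)+1)*S ≤ ((n:ℝ)+1)*(SF + ((1:ℝ)/2)^(N+1)) := mul_le_mul_of_nonneg_left hShigh hn1.le
  constructor
  · rw [sub_lt_iff_lt_add, div_lt_iff₀ hn1]
    have e1 : (S+ε)*((n:ℝ)+1) = ((n:ℝ)+1)*S + ε*((n:ℝ)+1) := by ring
    linarith [hup1, hup2, htel, m1, m2, hnum, e1]
  · rw [sub_lt_comm, lt_div_iff₀ hn1]
    have e2 : (S-ε)*((n:ℝ)+1) = ((n:ℝ)+1)*S - ε*((n:ℝ)+1) := by ring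
    have e3 : ((n:ℝ)+1)*(SF + ((1:ℝ)/2)^(N+1)) = ((n:ℝ)+1)*SF + ((n:ℝ)+1)*((1:ℝ)/2)^(N+1) := by ring
    linarith [hlow1, hlow2, m2, m3, hnum, e2, e3]
end

section
/- Every nonzero Turing degree contains a set which is not generically computable: for every noncomputable set A ⊆ ℕ there is a set B ⊆ ℕ with B ≡_T A such that B is not generically computable. -/
open Filter

open scoped Classical

/-! ### Auxiliary lemmas -/

def nu (m : ℕ) : ℕ := Nat.findGreatest (fun k => 2 ^ k ∣ m) m

lemma pow2_primrec : Primrec (fun k : ℕ => 2 ^ k) := by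
  have := Primrec.nat_iff.2 Nat.Primrec.pow
  exact (this.comp (Primrec₂.natPair.comp (.const 2) .id)).of_eq fun k => by simp

lemma nu_primrec : Primrec nu := by
  have hp : PrimrecRel (fun (m k : ℕ) => 2 ^ k ∣ m) := by
    have hmod : Primrec (fun p : ℕ × ℕ => p.1 % 2 ^ p.2) :=
      Primrec.nat_mod.comp .fst (pow2_primrec.comp .snd)
    have : PrimrecRel (fun (m k : ℕ) => m % 2 ^ k = 0) :=
      Primrec.eq.comp hmod (Primrec.const 0)
    exact this.of_eq fun m k => by
      simp [Nat.dvd_iff_mod_eq_zero, eq_comm]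
  exact Primrec.nat_findGreatest .id hp

lemma pow_dvd_le {m k : ℕ} (hm : m ≠ 0) (h : 2 ^ k ∣ m) : k ≤ m :=
  le_of_lt (calc k < 2 ^ k := Nat.lt_two_pow_self
  _ ≤ m := Nat.le_of_dvd (Nat.pos_of_ne_zero hm) h)

lemma nu_spec {m : ℕ} (hm : m ≠ 0) : m ∈ Rset (nu m) := by
  constructor
  · exact Nat.findGreatest_spec (P := fun k => 2 ^ k ∣ m) (Nat.zero_le m) (one_dvd m)
  · intro h
    exact Nat.findGreatest_is_greatest (Nat.lt_succ_self _) (pow_dvd_le hm h) h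

lemma Rset_unique {m k k' : ℕ} (h : m ∈ Rset k) (h' : m ∈ Rset k') : k = k' := by
  by_contra hne
  rcases Nat.lt_or_ge k k' with hlt | hge
  · exact h.2 (dvd_trans (pow_dvd_pow 2 hlt) h'.1)
  · rcases Nat.lt_or_ge k' k with hlt' | hge'
    · exact h'.2 (dvd_trans (pow_dvd_pow 2 hlt') h.1)
    · exact hne (le_antisymm hge' hge)

lemma mem_Rset_iff_nu {m k : ℕ} (hm : m ≠ 0) : m ∈ Rset k ↔ nu m = k :=
  ⟨fun h => Rset_unique (nu_spec hm) h, fun h => h ▸ nu_spec hm⟩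

lemma pow_self_mem_Rset (k : ℕ) : (2:ℕ) ^ k ∈ Rset k := by
  refine ⟨dvd_refl _, fun hd => ?_⟩
  have := Nat.le_of_dvd (by positivity) hd
  rw [pow_succ] at this
  nlinarith [Nat.one_le_two_pow (n := k)]

lemma pow_mem_Rset {k n : ℕ} : (2 : ℕ) ^ k ∈ Rset n ↔ n = k :=
  ⟨fun h => Rset_unique h (pow_self_mem_Rset k), fun h => h ▸ pow_self_mem_Rset k⟩

lemma zero_not_mem_Rset (k : ℕ) : (0 : ℕ) ∉ Rset k := fun h => h.2 (dvd_zero _)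

lemma mem_RofSet {A : Set ℕ} {m : ℕ} : m ∈ RofSet A ↔ ∃ n ∈ A, m ∈ Rset n := by
  simp [RofSet]

lemma pow_mem_RofSet {A : Set ℕ} {k : ℕ} : (2:ℕ) ^ k ∈ RofSet A ↔ k ∈ A := by
  rw [mem_RofSet]
  constructor
  · rintro ⟨n, hn, hmem⟩; rwa [pow_mem_Rset.1 hmem] at hn
  · intro h; exact ⟨k, h, pow_mem_Rset.2 rfl⟩

lemma mem_RofSet_iff_nu {A : Set ℕ} {m : ℕ} (hm : m ≠ 0) : m ∈ RofSet A ↔ nu m ∈ A := by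
  rw [mem_RofSet]
  constructor
  · rintro ⟨n, hn, hmem⟩; rw [← (mem_Rset_iff_nu hm).1 hmem] at hn; exact hn
  · intro h; exact ⟨nu m, h, nu_spec hm⟩

lemma odd_mem_Rset (k n : ℕ) : 2 ^ k * (2 * n + 1) ∈ Rset k := by
  refine ⟨Dvd.intro _ rfl, fun hd => ?_⟩
  rw [pow_succ] at hd
  have h2 : (2:ℕ) ∣ 2 * n + 1 :=
    (mul_dvd_mul_iff_left (a := (2:ℕ)^k) (by positivity)).1 hd
  omega

namespace OracleRecursiveIn

theorem of_eq {O : ℕ → ℕ} {f g : ℕ →. ℕ} (h : OracleRecursiveIn O f) (H : ∀ n, f n = g n) :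
    OracleRecursiveIn O g := (funext H : f = g) ▸ h

theorem of_natPartrec {O : ℕ → ℕ} {f : ℕ →. ℕ} (h : Nat.Partrec f) : OracleRecursiveIn O f := by
  induction h with
  | zero => exact .zero
  | succ => exact .succ
  | left => exact .left
  | right => exact .right
  | pair _ _ hf hg => exact .pair hf hg
  | comp _ _ hf hg => exact .comp hf hg
  | prec _ _ hf hg => exact .prec hf hg
  | rfind _ hf => exact .rfind hf

theorem of_computable {O : ℕ → ℕ} {f : ℕ → ℕ} (h : Computable f) :
    OracleRecursiveIn O (fun n => Part.some (f n)) :=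
  of_natPartrec (Partrec.nat_iff.1 (Computable.partrec h))

theorem totalComp {O : ℕ → ℕ} {f : ℕ →. ℕ} {g : ℕ → ℕ} (hf : OracleRecursiveIn O f)
    (hg : Computable g) : OracleRecursiveIn O (fun n => f (g n)) :=
  (comp hf (of_computable hg)).of_eq fun n => by exact Part.bind_some _ _

theorem totalMul {O : ℕ → ℕ} {f g : ℕ → ℕ}
    (hf : OracleRecursiveIn O (fun n => Part.some (f n)))
    (hg : OracleRecursiveIn O (fun n => Part.some (g n))) :
    OracleRecursiveIn O (fun n => Part.some (f n * g n)) := by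
  have hmul : Computable (fun p : ℕ => p.unpair.1 * p.unpair.2) :=
    Primrec.to_comp (Primrec.nat_mul.comp (Primrec.fst.comp Primrec.unpair)
      (Primrec.snd.comp Primrec.unpair))
  have := comp (of_computable hmul) (pair hf hg)
  exact this.of_eq fun n => by simp [Seq.seq]

end OracleRecursiveIn

lemma zero_not_mem_RofSet (A : Set ℕ) : (0:ℕ) ∉ RofSet A := by
  rw [mem_RofSet]; rintro ⟨n, _, h⟩; exact zero_not_mem_Rset n h

lemma charFun_RofSet_eq (A : Set ℕ) (m : ℕ) :
    charFun (RofSet A) m = charFun A (nu m) * min m 1 := by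
  rcases eq_or_ne m 0 with rfl | hm
  · simp [charFun, zero_not_mem_RofSet]
  · have h1 : min m 1 = 1 := by omega
    rw [h1, mul_one, charFun, charFun, mem_RofSet_iff_nu hm]

lemma red1 (A : Set ℕ) : OracleRecursiveIn (charFun A) (fun m => Part.some (charFun (RofSet A) m)) := by
  have h1 : OracleRecursiveIn (charFun A) (fun m => Part.some (charFun A (nu m))) :=
    OracleRecursiveIn.totalComp (f := fun n => Part.some (charFun A n)) .oracle (nu_primrec.to_comp)
  have h2 : OracleRecursiveIn (charFun A) (fun m => Part.some (min m 1)) :=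
    OracleRecursiveIn.of_computable ((Primrec.nat_min.comp Primrec.id (Primrec.const 1)).to_comp)
  exact (h1.totalMul h2).of_eq fun m => by rw [charFun_RofSet_eq]

lemma red2 (A : Set ℕ) : OracleRecursiveIn (charFun (RofSet A)) (fun k => Part.some (charFun A k)) := by
  have := OracleRecursiveIn.totalComp (f := fun n => Part.some (charFun (RofSet A) n)) (O := charFun (RofSet A)) .oracle pow2_primrec.to_comp
  exact this.of_eq fun k => by
    by_cases h : k ∈ A <;> simp [charFun, pow_mem_RofSet, h]

lemma dom_meets {D : Set ℕ} (hD : HasDensity D 1) (k : ℕ) : ∃ n, 2 ^ k * (2 * n + 1) ∈ D := by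
  by_contra hc
  push_neg at hc
  set c : ℝ := 1 - 1 / 2 ^ (k + 1) with hc_def
  have hM : ∀ j : ℕ, (1:ℕ) ≤ 2 ^ (k + 1) * (j + 1) := fun j => Nat.one_le_iff_ne_zero.mpr (by positivity)
  have key : ∀ j : ℕ, partialDensity D (2 ^ (k + 1) * (j + 1) - 1) ≤ c := by
    intro j
    set M : ℕ := 2 ^ (k + 1) * (j + 1) with hMdef
    have hM1 : 1 ≤ M := hM j
    have hrange : M - 1 + 1 = M := Nat.succ_pred_eq_of_pos hM1
    set S : Finset ℕ := (Finset.range (j + 1)).image (fun i => 2 ^ k * (2 * i + 1)) with hS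
    have hScard : S.card = j + 1 := by
      rw [hS, Finset.card_image_of_injective _ ?_, Finset.card_range]
      intro a b hab
      have : 2 * a + 1 = 2 * b + 1 := by
        have h2 : (0:ℕ) < 2 ^ k := by positivity
        exact Nat.eq_of_mul_eq_mul_left h2 hab
      omega
    have hSsub : S ⊆ Finset.range M := by
      intro x hx
      rw [hS, Finset.mem_image] at hx
      obtain ⟨i, hi, rfl⟩ := hx
      rw [Finset.mem_range] at hi ⊢
      calc 2 ^ k * (2 * i + 1) < 2 ^ k * (2 * (j + 1)) := by
            have h2 : (0:ℕ) < 2 ^ k := by positivity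
            exact (Nat.mul_lt_mul_left h2).2 (by omega)
      _ = M := by rw [hMdef, pow_succ]; ring
    have hfilter : (Finset.range M).filter (· ∈ D) ⊆ Finset.range M \ S := by
      intro x hx
      rw [Finset.mem_filter] at hx
      rw [Finset.mem_sdiff]
      refine ⟨hx.1, fun hxS => ?_⟩
      rw [hS, Finset.mem_image] at hxS
      obtain ⟨i, _, rfl⟩ := hxS
      exact hc i hx.2
    have hcard : ((Finset.range M).filter (· ∈ D)).card ≤ M - (j + 1) := by
      calc ((Finset.range M).filter (· ∈ D)).card ≤ (Finset.range M \ S).card :=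
            Finset.card_le_card hfilter
      _ = M - (j + 1) := by rw [Finset.card_sdiff_of_subset hSsub, Finset.card_range, hScard]
    have hj1M : j + 1 ≤ M := by
      calc j + 1 ≤ 2 ^ (k+1) * (j + 1) := Nat.le_mul_of_pos_left _ (by positivity)
      _ = M := rfl
    unfold partialDensity
    rw [hrange]
    have hMpos : (0:ℝ) < (M:ℝ) := by exact_mod_cast hM1
    have hcast : ((M:ℝ) - 1) + 1 = (M:ℝ) := by ring
    have hden : ((M - 1 : ℕ) : ℝ) + 1 = (M:ℝ) := by
      rw [Nat.cast_sub hM1]; push_cast; ring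
    rw [hden]
    rw [div_le_iff₀ hMpos]
    have hcardR : (((Finset.range M).filter (· ∈ D)).card : ℝ) ≤ (M:ℝ) - (j+1) := by
      have := hcard
      have h2 : ((M - (j+1) : ℕ) : ℝ) = (M:ℝ) - (j+1) := by
        rw [Nat.cast_sub hj1M]; push_cast; ring
      calc (((Finset.range M).filter (· ∈ D)).card : ℝ) ≤ ((M - (j+1) : ℕ) : ℝ) := by
            exact_mod_cast this
      _ = (M:ℝ) - (j+1) := h2
    refine hcardR.trans ?_
    have hMR : (M:ℝ) = 2 ^ (k+1) * (j+1) := by rw [hMdef]; push_cast; ring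
    rw [hc_def, hMR]
    have heq : (1 - 1/(2:ℝ)^(k+1)) * (2^(k+1) * ((j:ℝ)+1)) = 2^(k+1)*((j:ℝ)+1) - ((j:ℝ)+1) := by
      have hp : ((2:ℝ)^(k+1)) ≠ 0 := by positivity
      field_simp
    rw [heq]
  have hφ : Tendsto (fun j : ℕ => 2 ^ (k + 1) * (j + 1) - 1) atTop atTop := by
    apply tendsto_atTop_mono (f := fun j : ℕ => j)
    · intro j
      have h2 : 2 * (j + 1) ≤ 2 ^ (k+1) * (j+1) :=
        Nat.mul_le_mul_right _ (by
          have := Nat.one_le_two_pow (n := k)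
          calc 2 = 2^1 := rfl
          _ ≤ 2^(k+1) := Nat.pow_le_pow_right (by norm_num) (by omega))
      omega
    · exact tendsto_id
  have hsub := hD.comp hφ
  have hle : (1:ℝ) ≤ c := le_of_tendsto hsub (Eventually.of_forall key)
  have : (0:ℝ) < 1 / 2 ^ (k+1) := by positivity
  rw [hc_def] at hle
  linarith

lemma charFun_RofSet_of_mem_Rset (A : Set ℕ) {m k : ℕ} (h : m ∈ Rset k) :
    charFun (RofSet A) m = charFun A k := by
  have : m ∈ RofSet A ↔ k ∈ A := by
    rw [mem_RofSet]
    exact ⟨fun ⟨n, hn, hm⟩ => (Rset_unique hm h) ▸ hn, fun hk => ⟨k, hk, h⟩⟩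
  by_cases hk : k ∈ A <;> simp [charFun, this, hk]

lemma not_gc (A : Set ℕ) (hA : ¬ComputableSet A) : ¬GenericallyComputable (RofSet A) := by
  rintro ⟨Φ, hΦpr, hagree, hdens⟩
  apply hA
  obtain ⟨c, hc⟩ := Nat.Partrec.Code.exists_code.1 (Partrec.nat_iff.1 hΦpr)
  set f : ℕ → ℕ → Option ℕ := fun k s =>
    Nat.Partrec.Code.evaln s.unpair.1 c (2 ^ k * (2 * s.unpair.2 + 1)) with hf
  have hcomp : Computable₂ f := by
    have harg : Computable (fun p : ℕ × ℕ =>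
        ((p.2.unpair.1, c), 2 ^ p.1 * (2 * p.2.unpair.2 + 1))) := by
      apply Computable.pair
      · exact Computable.pair
          ((Primrec.fst.comp (Primrec.unpair.comp Primrec.snd)).to_comp)
          (Computable.const c)
      · exact (Primrec.nat_mul.comp (pow2_primrec.comp .fst)
          (Primrec.succ.comp (Primrec.nat_mul.comp (.const 2)
            (Primrec.snd.comp (Primrec.unpair.comp .snd))))).to_comp
    exact (Nat.Partrec.Code.primrec_evaln.to_comp.comp harg).to₂
  have hF : Partrec (fun k => Nat.rfindOpt (f k)) := Partrec.rfindOpt hcomp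
  have hFval : ∀ k, Nat.rfindOpt (f k) = Part.some (charFun A k) := by
    intro k
    have hdom : (Nat.rfindOpt (f k)).Dom := by
      obtain ⟨n, hn⟩ := dom_meets hdens k
      have hΦdom : (Φ (2 ^ k * (2 * n + 1))).Dom := hn
      set m := 2 ^ k * (2 * n + 1)
      obtain ⟨a, ha⟩ := Part.dom_iff_mem.1 hΦdom
      rw [← hc] at ha
      obtain ⟨s, hs⟩ := Nat.Partrec.Code.evaln_complete.1 ha
      exact Nat.rfindOpt_dom.2 ⟨Nat.pair s n, _, by simpa [hf] using hs⟩
    rw [Part.eq_some_iff]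
    have hb : (Nat.rfindOpt (f k)).get hdom ∈ Nat.rfindOpt (f k) := Part.get_mem hdom
    obtain ⟨t, ht⟩ := Nat.rfindOpt_spec hb
    have hev : (Nat.rfindOpt (f k)).get hdom ∈
        Φ (2 ^ k * (2 * t.unpair.2 + 1)) := by
      rw [← hc]
      exact Nat.Partrec.Code.evaln_sound ht
    have heq := hagree _ _ hev
    rw [charFun_RofSet_of_mem_Rset A (odd_mem_Rset k t.unpair.2)] at heq
    rwa [heq] at hb
  have hchar : Computable (charFun A) := by
    have : Partrec (fun k => Part.some (charFun A k)) := hF.of_eq hFval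
    exact this
  rw [ComputableSet, ComputablePred.computable_iff]
  refine ⟨fun k => charFun A k == 1, ?_, ?_⟩
  · exact ((Primrec.beq.comp .id (.const 1)).to_comp).comp hchar
  · funext k
    by_cases hk : k ∈ A <;> simp [charFun, hk]


/-- every nonzero Turing degree contains a set which is not
generically computable. -/
theorem stmt8 (A : Set ℕ) (hA : ¬ComputableSet A) :
    ∃ B : Set ℕ, SetTuringEquivalent B A ∧ ¬GenericallyComputable B := by
  exact ⟨RofSet A, ⟨red1 A, red2 A⟩, not_gc A hA⟩
end

section
/- Every nonzero Turing degree contains a set which is not coarsely computable: for every noncomputable set A ⊆ ℕ there is a set B ⊆ ℕ with B ≡_T A such that B is not coarsely computable. -/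
open Filter

namespace Stmt12X

def c (n : ℕ) : ℕ := 2 ^ (n * n) - 1

lemma c_zero : c 0 = 0 := rfl

lemma c_lt_succ (n : ℕ) : c n < c (n + 1) := by
  have h1 : 1 ≤ 2 ^ (n * n) := Nat.one_le_two_pow
  have h2 : 2 ^ (n * n) < 2 ^ ((n + 1) * (n + 1)) :=
    Nat.pow_lt_pow_right one_lt_two (by nlinarith)
  simp only [c]; omega

lemma c_strictMono : StrictMono c := strictMono_nat_of_lt_succ c_lt_succ

lemma le_c (n : ℕ) : n ≤ c n := by
  have h1 : n < 2 ^ n := Nat.lt_two_pow_self (n := n)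
  have h2 : 2 ^ n ≤ 2 ^ (n * n) := Nat.pow_le_pow_right (by norm_num) (by nlinarith)
  simp only [c]; omega

lemma two_c_le (n : ℕ) : 2 * c n ≤ c (n + 1) := by
  have h1 : 2 ^ (n * n + 1) ≤ 2 ^ ((n + 1) * (n + 1)) :=
    Nat.pow_le_pow_right (by norm_num) (by nlinarith)
  have h2 : 1 ≤ 2 ^ (n * n) := Nat.one_le_two_pow
  rw [pow_succ] at h1
  simp only [c]; omega

def invc (m : ℕ) : ℕ := Nat.findGreatest (fun n => c n ≤ m) m

lemma c_invc_le (m : ℕ) : c (invc m) ≤ m :=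
  Nat.findGreatest_spec (P := fun n => c n ≤ m) (Nat.zero_le m) (by simp [c])

lemma lt_c_invc_succ (m : ℕ) : m < c (invc m + 1) := by
  by_contra h
  push_neg at h
  have h2 : invc m + 1 ≤ m := le_trans (le_c _) h
  have := Nat.le_findGreatest (P := fun n => c n ≤ m) h2 h
  simp only [invc] at *
  omega

lemma invc_eq {n m : ℕ} (h1 : c n ≤ m) (h2 : m < c (n + 1)) : invc m = n := by
  have hc1 := c_invc_le m
  have hc2 := lt_c_invc_succ m
  rcases lt_trichotomy (invc m) n with h | h | h
  · have := c_strictMono.monotone (show invc m + 1 ≤ n from h)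
    omega
  · exact h
  · have := c_strictMono.monotone (show n + 1 ≤ invc m from h)
    omega


/-- The interval partition set. -/
def Bset (A : Set ℕ) : Set ℕ := {m | invc m ∈ A}

lemma mem_Bset {A : Set ℕ} {m : ℕ} : m ∈ Bset A ↔ invc m ∈ A := Iff.rfl

lemma charFun_Bset (A : Set ℕ) (m : ℕ) : charFun (Bset A) m = charFun A (invc m) := by
  simp only [charFun]
  by_cases h : invc m ∈ A <;> simp [mem_Bset, h]

lemma invc_c (n : ℕ) : invc (c n) = n := invc_eq le_rfl (c_lt_succ n)

lemma charFun_c (A : Set ℕ) (n : ℕ) : charFun A n = charFun (Bset A) (c n) := by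
  rw [charFun_Bset, invc_c]

lemma primrec_c : Primrec c := by
  have hpow : Primrec (Nat.unpaired (· ^ ·)) := Primrec.nat_iff.2 Nat.Primrec.pow
  have h1 : Primrec fun n : ℕ => Nat.pair 2 (n * n) :=
    Primrec₂.natPair.comp (Primrec.const 2) (Primrec.nat_mul.comp Primrec.id Primrec.id)
  exact ((Primrec.nat_sub.comp (hpow.comp h1) (Primrec.const 1))).of_eq fun n => by
    simp [c, Nat.unpaired]

lemma primrec_invc : Primrec invc := by
  have hrel : PrimrecRel fun (m k : ℕ) => c k ≤ m :=
    Primrec.nat_le.comp₂ (primrec_c.comp₂ Primrec₂.right) Primrec₂.left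
  exact (Primrec.nat_findGreatest Primrec.id hrel).of_eq fun m => rfl

end Stmt12X

lemma RecursiveIn'.of_partrec {O : ℕ → ℕ} {f : ℕ →. ℕ} (h : Nat.Partrec f) :
    RecursiveIn' O f := by
  induction h with
  | zero => exact .zero
  | succ => exact .succ
  | left => exact .left
  | right => exact .right
  | pair _ _ ihf ihg => exact .pair ihf ihg
  | comp _ _ ihf ihg => exact .comp ihf ihg
  | prec _ _ ihf ihg => exact .prec ihf ihg
  | rfind _ ih => exact .rfind ih

lemma reducible_of_comp {X : Set ℕ} {g : ℕ → ℕ} (hg : Computable g) {h : ℕ → ℕ}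
    (hh : ∀ n, h n = charFun X (g n)) :
    RecursiveIn' (charFun X) fun n => Part.some (h n) := by
  have h1 : Nat.Partrec (fun n => Part.some (g n) : ℕ →. ℕ) := Partrec.nat_iff.1 hg
  have h2 := RecursiveIn'.comp (O := charFun X)
    (f := fun n => Part.some (charFun X n)) (.oracle) (RecursiveIn'.of_partrec h1)
  have he : (fun n => (Part.some (g n) : Part ℕ) >>= fun m => Part.some (charFun X m))
      = fun n => Part.some (h n) := funext fun n => by simp [hh n]
  exact he ▸ h2

lemma turingEquivalent_Bset (A : Set ℕ) : TuringEquivalent' (Stmt12X.Bset A) A := by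
  constructor
  · exact reducible_of_comp Stmt12X.primrec_invc.to_comp
      (fun n => Stmt12X.charFun_Bset A n)
  · exact reducible_of_comp Stmt12X.primrec_c.to_comp
      (fun n => Stmt12X.charFun_c A n)


namespace Stmt12X

/-- `cnt f k` = number of `m < k` with `f m = true`. -/
def cnt (f : ℕ → Bool) : ℕ → ℕ := fun k =>
  Nat.rec 0 (fun m ih => ih + cond (f m) 1 0) k

lemma cnt_succ (f : ℕ → Bool) (k : ℕ) :
    cnt f (k + 1) = cnt f k + cond (f k) 1 0 := rfl

lemma cnt_eq (f : ℕ → Bool) (k : ℕ) :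
    cnt f k = ((Finset.range k).filter (fun m => f m = true)).card := by
  induction k with
  | zero => simp [cnt]
  | succ k ih =>
    rw [cnt_succ, ih, Finset.range_add_one, Finset.filter_insert]
    by_cases h : f k = true
    · rw [if_pos h, Finset.card_insert_of_notMem (by simp), h]
      rfl
    · rw [if_neg h]
      simp only [Bool.not_eq_true] at h
      simp [h]

lemma cnt_Ico (f : ℕ → Bool) {a b : ℕ} (hab : a ≤ b) :
    cnt f b - cnt f a = ((Finset.Ico a b).filter (fun m => f m = true)).card := by
  have hu : Finset.Ico 0 a ∪ Finset.Ico a b = Finset.Ico 0 b :=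
    Finset.Ico_union_Ico_eq_Ico (Nat.zero_le a) hab
  have hd : Disjoint (Finset.Ico 0 a) (Finset.Ico a b) :=
    Finset.Ico_disjoint_Ico_consecutive 0 a b
  have h1 : cnt f b = cnt f a + ((Finset.Ico a b).filter (fun m => f m = true)).card := by
    rw [cnt_eq, cnt_eq, Finset.range_eq_Ico, ← hu,
      Finset.filter_union, Finset.card_union_of_disjoint
        (Finset.disjoint_filter_filter hd), Finset.range_eq_Ico]
  omega

lemma computable_cnt {f : ℕ → Bool} (hf : Computable f) : Computable (cnt f) := by
  have hh : Computable fun p : ℕ × (ℕ × ℕ) => p.2.2 + cond (f p.2.1) 1 0 := by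
    have hcond : Computable fun p : ℕ × (ℕ × ℕ) => cond (f p.2.1) 1 0 :=
      Computable.cond (hf.comp (Computable.fst.comp Computable.snd))
        (Computable.const 1) (Computable.const 0)
    exact Primrec.nat_add.to_comp.comp (Computable.snd.comp Computable.snd) hcond
  exact (Computable.nat_rec Computable.id (Computable.const 0) hh.to₂).of_eq fun k => rfl

end Stmt12X

namespace Stmt12X

lemma key_density (A C : Set ℕ) (f : ℕ → Bool) (hfC : ∀ m, m ∈ C ↔ f m = true)
    (hsim : HasDensity (symmDiff (Bset A) C) 0) :
    ∃ N : ℕ, ∀ n ≥ N,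
      (n ∈ A ↔ c (n + 1) - c n < 2 * (cnt f (c (n + 1)) - cnt f (c n))) := by
  classical
  have hev : ∀ᶠ k in Filter.atTop, partialDensity (symmDiff (Bset A) C) k < 1 / 4 :=
    hsim.eventually_lt_const (by norm_num)
  obtain ⟨N, hN⟩ := Filter.eventually_atTop.1 hev
  refine ⟨N, fun n hn => ?_⟩
  by_contra hne
  set S : Set ℕ := symmDiff (Bset A) C with hS
  set I : Finset ℕ := Finset.Ico (c n) (c (n + 1)) with hI
  have hinv : ∀ m ∈ I, invc m = n := fun m hm =>
    invc_eq (Finset.mem_Ico.1 hm).1 (Finset.mem_Ico.1 hm).2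
  have hcnt : cnt f (c (n + 1)) - cnt f (c n)
      = (I.filter (fun m => f m = true)).card := cnt_Ico f (c_lt_succ n).le
  have hIcard : I.card = c (n + 1) - c n := Nat.card_Ico _ _
  have hsplit := Finset.card_filter_add_card_filter_not
    (s := I) (p := fun m => f m = true)
  have hcard : c (n + 1) - c n ≤ 2 * (I.filter (· ∈ S)).card := by
    rcases Classical.em (n ∈ A) with hA | hA
    · have hD : ¬ c (n + 1) - c n < 2 * (cnt f (c (n + 1)) - cnt f (c n)) :=
        fun h => hne (iff_of_true hA h)
      have hfilter : I.filter (· ∈ S) = I.filter (fun m => ¬ f m = true) := by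
        apply Finset.filter_congr
        intro m hm
        have hmB : m ∈ Bset A := mem_Bset.2 (by rw [hinv m hm]; exact hA)
        simp [hS, Set.mem_symmDiff, hmB, hfC m]
      rw [hcnt] at hD
      rw [hfilter]
      omega
    · have hD : c (n + 1) - c n < 2 * (cnt f (c (n + 1)) - cnt f (c n)) := by
        by_contra h
        exact hne (iff_of_false hA h)
      have hfilter : I.filter (· ∈ S) = I.filter (fun m => f m = true) := by
        apply Finset.filter_congr
        intro m hm
        have hmB : m ∉ Bset A := fun hmem => hA (by rw [← hinv m hm]; exact hmem)
        simp [hS, Set.mem_symmDiff, hmB, hfC m]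
      rw [hcnt] at hD
      rw [hfilter]
      omega
  have hc1 : n + 1 ≤ c (n + 1) := le_c (n + 1)
  have hsub : (I.filter (· ∈ S)).card
      ≤ ((Finset.range (c (n + 1))).filter (· ∈ S)).card := by
    apply Finset.card_le_card
    apply Finset.filter_subset_filter
    intro x hx
    rw [Finset.mem_range]
    exact (Finset.mem_Ico.1 hx).2
  have h4 : c (n + 1) ≤ 4 * ((Finset.range (c (n + 1))).filter (· ∈ S)).card := by
    have := two_c_le n
    have := (c_lt_succ n).le
    omega
  have hpd : (1 : ℝ) / 4 ≤ partialDensity S (c (n + 1) - 1) := by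
    have hm1 : c (n + 1) - 1 + 1 = c (n + 1) := by omega
    rw [partialDensity, le_div_iff₀ (by positivity)]
    have hce : ((c (n + 1) - 1 : ℕ) : ℝ) + 1 = ((c (n + 1) : ℕ) : ℝ) := by
      exact_mod_cast hm1
    rw [hce, hm1]
    have h4' : (c (n + 1) : ℝ)
        ≤ 4 * (((Finset.range (c (n + 1))).filter (· ∈ S)).card : ℝ) := by
      exact_mod_cast h4
    nlinarith
  have hlt := hN (c (n + 1) - 1) (by omega)
  linarith

lemma computablePred_of_eventually (A : Set ℕ) (g : ℕ → Bool) (hg : Computable g)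
    (N : ℕ) (h : ∀ n ≥ N, (n ∈ A ↔ g n = true)) : ComputablePred (· ∈ A) := by
  classical
  set l : List Bool := (List.range N).map (fun k => decide (k ∈ A)) with hl
  refine ComputablePred.computable_iff.2
    ⟨fun n => cond (decide (n < N)) (l.getD n false) (g n), ?_, ?_⟩
  · exact Computable.cond
      ((Primrec.nat_lt.comp Primrec.id (Primrec.const N)).decide.to_comp)
      (((Primrec.list_getD false).comp (Primrec.const l) Primrec.id).to_comp) hg
  · funext n
    by_cases hn : n < N
    · have hlen : n < l.length := by simp [hl, hn]
      have h1 : l.getD n false = decide (n ∈ A) := by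
        rw [List.getD_eq_getElem?_getD, List.getElem?_eq_getElem hlen, Option.getD_some]
        simp [hl]
      have h2 : cond (decide (n < N)) (l.getD n false) (g n) = decide (n ∈ A) := by
        rw [show decide (n < N) = true from decide_eq_true hn, cond_true, h1]
      show (n ∈ A) = (cond (decide (n < N)) (l.getD n false) (g n) : Prop)
      rw [h2]
      simp
    · have h2 : cond (decide (n < N)) (l.getD n false) (g n) = g n := by
        rw [show decide (n < N) = false from decide_eq_false hn, cond_false]
      show (n ∈ A) = (cond (decide (n < N)) (l.getD n false) (g n) : Prop)
      rw [h2]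
      simp [h n (Nat.le_of_not_lt hn)]

end Stmt12X

/-- every nonzero Turing degree contains a set which is not
coarsely computable. -/
theorem stmt12 (A : Set ℕ) (hA : ¬ComputableSet A) :
    ∃ B : Set ℕ, TuringEquivalent' B A ∧ ¬CoarselyComputable B := by
  refine ⟨Stmt12X.Bset A, turingEquivalent_Bset A, fun hcc => hA ?_⟩
  obtain ⟨C, hCcomp, hsim⟩ := hcc
  obtain ⟨f, hf, hfeq⟩ := ComputablePred.computable_iff.1 hCcomp
  have hfC : ∀ m, m ∈ C ↔ f m = true := fun m => iff_of_eq (congrFun hfeq m)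
  obtain ⟨N, hN⟩ := Stmt12X.key_density A C f hfC hsim
  have hgcomp : Computable fun n =>
      decide (Stmt12X.c (n + 1) - Stmt12X.c n
        < 2 * (Stmt12X.cnt f (Stmt12X.c (n + 1)) - Stmt12X.cnt f (Stmt12X.c n))) := by
    have hc1 : Computable fun n => Stmt12X.c (n + 1) :=
      Stmt12X.primrec_c.to_comp.comp Computable.succ
    have hc0 : Computable fun n : ℕ => Stmt12X.c n := Stmt12X.primrec_c.to_comp
    have hL : Computable fun n => Stmt12X.c (n + 1) - Stmt12X.c n :=
      Primrec.nat_sub.to_comp.comp hc1 hc0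
    have hcnt := Stmt12X.computable_cnt hf
    have hR : Computable fun n =>
        2 * (Stmt12X.cnt f (Stmt12X.c (n + 1)) - Stmt12X.cnt f (Stmt12X.c n)) :=
      Primrec.nat_mul.to_comp.comp (Computable.const 2)
        (Primrec.nat_sub.to_comp.comp (hcnt.comp hc1) (hcnt.comp hc0))
    exact Primrec.nat_lt.decide.to_comp.comp hL hR
  exact Stmt12X.computablePred_of_eventually A _ hgcomp N fun n hn => by
    rw [hN n hn]
    simp [decide_eq_true_iff]
end

section
/- A real number r ∈ [0,1] is the asymptotic density of some computable subset of ℕ if and only if r is a Δ⁰₂ real, i.e. r = lim_{n→∞} q_n for some computable sequence (q_n) of rational numbers. -/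
open Filter

/-- `r` is a `Δ⁰₂` real: the limit of a computable sequence of rationals. -/
def Delta02Real (r : ℝ) : Prop :=
  ∃ q : ℕ → ℚ, Computable q ∧
    Filter.Tendsto (fun n => (q n : ℝ)) Filter.atTop (nhds r)

namespace Stmt13Aux

lemma encode_intCast (k : ℕ) : Encodable.encode (k : ℤ) = 2 * k := rfl
lemma encode_negSucc (k : ℕ) : Encodable.encode (Int.negSucc k) = 2 * k + 1 := rfl

/-- The "raw" encoding of a rational as `pair (encode num) den`. -/
def rawE (q : ℚ) : ℕ := Nat.pair (Encodable.encode q.num) q.den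

lemma raw_encode_eq (q : ℚ) : @Encodable.encode ℚ Rat.instEncodable q = rawE q := rfl

/-- counting function from a Bool predicate -/
def cnt (f : ℕ → Bool) (n : ℕ) : ℕ := Nat.rec 0 (fun y IH => IH + (bif f y then 1 else 0)) n

@[simp] lemma cnt_zero (f : ℕ → Bool) : cnt f 0 = 0 := rfl
@[simp] lemma cnt_succ (f : ℕ → Bool) (n : ℕ) :
    cnt f (n + 1) = cnt f n + (bif f n then 1 else 0) := rfl

lemma cnt_mono (f : ℕ → Bool) {m n : ℕ} (h : m ≤ n) : cnt f m ≤ cnt f n := by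
  induction h with
  | refl => exact le_rfl
  | step _ ih => exact le_trans ih (Nat.le_add_right _ _)

lemma cnt_computable {f : ℕ → Bool} (hf : Computable f) : Computable (cnt f) := by
  have h : Computable₂ (fun (_ : ℕ) (p : ℕ × ℕ) => p.2 + (bif f p.1 then 1 else 0)) := by
    exact Computable₂.comp Primrec.nat_add.to_comp
      (Computable.snd.comp Computable.snd)
      (Computable.cond (hf.comp (Computable.fst.comp Computable.snd))
        (Computable.const 1) (Computable.const 0))
  exact (Computable.nat_rec Computable.id (Computable.const 0) h).of_eq (fun n => rfl)

lemma countP_range_eq_cnt (g : ℕ → Bool) (x : ℕ) : (List.range x).countP g = cnt g x := by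
  induction x with
  | zero => simp
  | succ k ih =>
    rw [List.range_succ, List.countP_append, cnt_succ, ih]
    cases hg : g k <;> simp [List.countP, List.countP.go, hg]

open scoped Classical in
lemma partialDensity_eq (A : Set ℕ) (c : ℕ → ℕ) (h0 : c 0 = 0)
    (hs : ∀ n, c (n + 1) = c n + if n ∈ A then 1 else 0) (n : ℕ) :
    partialDensity A n = (c (n + 1) : ℝ) / (n + 1) := by
  have key : ∀ m, ((Finset.range m).filter (· ∈ A)).card = c m := by
    intro m
    induction m with
    | zero => simp [h0]
    | succ k ih =>
      rw [Finset.range_add_one, Finset.filter_insert, hs k]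
      by_cases h : k ∈ A
      · rw [if_pos h, if_pos h, Finset.card_insert_of_notMem (by simp), ih]
      · rw [if_neg h, if_neg h, ih]; omega
  rw [partialDensity, key]

lemma lt_div_succ_mul (a b : ℕ) (hb : 0 < b) : a < (a / b + 1) * b := by
  have h1 := Nat.div_add_mod a b
  have h2 := Nat.mod_lt a hb
  have h3 : (a / b + 1) * b = b * (a / b) + b := by ring
  omega

/-! ### gcd is primitive recursive -/

def estep (p : ℕ × ℕ) : ℕ × ℕ := if p.1 = 0 then p else (p.2 % p.1, p.1)

lemma estep_iter : ∀ (fuel x y : ℕ), x ≤ fuel → estep^[fuel] (x, y) = (0, Nat.gcd x y) := by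
  intro fuel
  induction fuel with
  | zero =>
    intro x y hx
    have : x = 0 := by omega
    subst this
    simp [Nat.gcd_zero_left]
  | succ f ih =>
    intro x y hx
    by_cases h : x = 0
    · subst h
      rw [Function.iterate_succ_apply, show estep (0, y) = (0, y) by simp [estep]]
      exact ih 0 y (by omega)
    · rw [Function.iterate_succ_apply, show estep (x, y) = (y % x, x) by simp [estep, h]]
      rw [ih (y % x) x (by have := Nat.mod_lt y (show 0 < x by omega); omega)]
      rw [Nat.gcd_rec x y]

lemma natrec_eq_iter (p : ℕ × ℕ) :
    ∀ n, (Nat.rec p (fun _ IH => estep IH) n : ℕ × ℕ) = estep^[n] p := by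
  intro n
  induction n with
  | zero => rfl
  | succ k ih => rw [Function.iterate_succ_apply']; exact congrArg estep ih

lemma estep_primrec : Primrec estep := by
  refine Primrec.ite ?_ Primrec.id (Primrec.pair (Primrec.nat_mod.comp Primrec.snd Primrec.fst) Primrec.fst)
  exact Primrec.eq.comp Primrec.fst (Primrec.const 0)

lemma gcd_primrec : Primrec₂ Nat.gcd := by
  have hrec : Primrec₂ (fun (p : ℕ × ℕ) (n : ℕ) =>
      (Nat.rec p (fun _ IH => estep IH) n : ℕ × ℕ)) := by
    have := Primrec.nat_rec (f := fun p : ℕ × ℕ => p)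
      (g := fun (_ : ℕ × ℕ) (q : ℕ × (ℕ × ℕ)) => estep q.2)
      Primrec.id (estep_primrec.comp (Primrec.snd.comp Primrec.snd))
    exact this
  have h2 : Primrec (fun p : ℕ × ℕ => (Nat.rec p (fun _ IH => estep IH) p.1 : ℕ × ℕ).2) :=
    Primrec.snd.comp (hrec.comp Primrec.id Primrec.fst)
  have h3 : Primrec (fun p : ℕ × ℕ => Nat.gcd p.1 p.2) := by
    refine h2.of_eq fun p => ?_
    rw [natrec_eq_iter, estep_iter p.1 p.1 p.2 le_rfl]
  exact h3

/-! ### the range of the raw rational encoding -/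

def natAbsCode (e : ℕ) : ℕ := (e + 1) / 2

lemma natAbsCode_encode (m : ℤ) : natAbsCode (Encodable.encode m) = m.natAbs := by
  cases m with
  | ofNat k => rw [show ((Int.ofNat k)) = (k : ℤ) from rfl, encode_intCast]; simp [natAbsCode]; omega
  | negSucc k => rw [encode_negSucc]; simp [natAbsCode]; omega

def SChar (j : ℕ) : Bool :=
  decide ((Nat.unpair j).2 ≠ 0) &&
    decide (Nat.gcd (natAbsCode (Nat.unpair j).1) (Nat.unpair j).2 = 1)

lemma SChar_computable : Computable SChar := by
  have h1 : Primrec fun j => decide ((Nat.unpair j).2 ≠ 0) :=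
    PrimrecPred.decide (PrimrecPred.not (Primrec.eq.comp (Primrec.snd.comp Primrec.unpair) (Primrec.const 0)))
  have habs : Primrec (fun j : ℕ => natAbsCode (Nat.unpair j).1) :=
    Primrec.nat_div.comp (Primrec.succ.comp (Primrec.fst.comp Primrec.unpair)) (Primrec.const 2)
  have h2 : Primrec fun j => decide (Nat.gcd (natAbsCode (Nat.unpair j).1) (Nat.unpair j).2 = 1) :=
    PrimrecPred.decide (Primrec.eq.comp (gcd_primrec.comp habs (Primrec.snd.comp Primrec.unpair)) (Primrec.const 1))
  exact ((Primrec.dom_bool₂ (· && ·)).comp h1 h2).to_comp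

lemma SChar_rawE (q : ℚ) : SChar (rawE q) = true := by
  rw [SChar, rawE, Bool.and_eq_true, decide_eq_true_iff, decide_eq_true_iff, Nat.unpair_pair]
  refine ⟨q.den_nz, ?_⟩
  rw [natAbsCode_encode]
  exact q.reduced

lemma SChar_iff (j : ℕ) : SChar j = true ↔ ∃ q : ℚ, rawE q = j := by
  constructor
  · intro h
    rw [SChar, Bool.and_eq_true, decide_eq_true_iff, decide_eq_true_iff] at h
    obtain ⟨hd, hg⟩ := h
    set m : ℤ := Denumerable.ofNat ℤ (Nat.unpair j).1 with hm
    have hme : Encodable.encode m = (Nat.unpair j).1 := Denumerable.encode_ofNat _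
    have hcop : m.natAbs.Coprime (Nat.unpair j).2 := by
      have := natAbsCode_encode m
      rw [hme] at this
      rw [Nat.Coprime, ← this]
      exact hg
    refine ⟨Rat.mk' m (Nat.unpair j).2 hd hcop, ?_⟩
    rw [rawE]
    show Nat.pair (Encodable.encode m) (Nat.unpair j).2 = j
    rw [hme, Nat.pair_unpair]
  · rintro ⟨q, rfl⟩
    exact SChar_rawE q

lemma encode'_eq (q : ℚ) :
    @Encodable.encode ℚ Primcodable.toEncodable q = cnt SChar (rawE q) := by
  have h0 : @Encodable.encode ℚ Primcodable.toEncodable q =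
      (List.range (rawE q)).countP
        (fun j => @decide (j ∈ Set.range (@Encodable.encode ℚ Rat.instEncodable))
          (Encodable.decidableRangeEncode ℚ j)) := rfl
  rw [h0, countP_range_eq_cnt]
  have hfun : (fun j => @decide (j ∈ Set.range (@Encodable.encode ℚ Rat.instEncodable))
      (Encodable.decidableRangeEncode ℚ j)) = SChar := by
    funext j
    by_cases hj : ∃ q' : ℚ, rawE q' = j
    · have h1 : SChar j = true := (SChar_iff j).mpr hj
      have h2 : j ∈ Set.range (@Encodable.encode ℚ Rat.instEncodable) := by
        obtain ⟨q', hq'⟩ := hj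
        exact ⟨q', by rw [raw_encode_eq, hq']⟩
      rw [h1]
      exact @decide_eq_true _ (Encodable.decidableRangeEncode ℚ j) h2
    · have h1 : SChar j = false := by
        rcases Bool.eq_false_or_eq_true (SChar j) with hb | hb
        · exact absurd ((SChar_iff j).mp hb) hj
        · exact hb
      have h2 : j ∉ Set.range (@Encodable.encode ℚ Rat.instEncodable) := by
        rintro ⟨q', hq'⟩
        exact hj ⟨q', by rw [← raw_encode_eq, hq']⟩
      rw [h1]
      exact @decide_eq_false _ (Encodable.decidableRangeEncode ℚ j) h2
  rw [hfun]

/-- `a / 2^n` for odd `a` has raw encoding `pair (2a) (2^n)`. -/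
lemma rawE_div_pow2 (a n : ℕ) (ha : a % 2 = 1) :
    rawE ((a : ℚ) / ((2 ^ n : ℕ) : ℚ)) = Nat.pair (2 * a) (2 ^ n) := by
  have hcop : Nat.Coprime a (2 ^ n) := by
    refine Nat.Coprime.pow_right _ ?_
    exact Odd.coprime_two_right ⟨a / 2, by omega⟩
  have hb : (0 : ℤ) < (2 ^ n : ℕ) := by positivity
  have hcop' : ((a : ℤ)).natAbs.Coprime ((2 ^ n : ℕ) : ℤ).natAbs := by
    rw [Int.natAbs_natCast, Int.natAbs_natCast]; exact hcop
  have hq : ((a : ℚ) / ((2 ^ n : ℕ) : ℚ)) = ((a : ℤ) : ℚ) / (((2 ^ n : ℕ) : ℤ) : ℚ) := by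
    push_cast; ring
  have hnum : ((a : ℚ) / ((2 ^ n : ℕ) : ℚ)).num = (a : ℤ) := by
    rw [hq]; exact Rat.num_div_eq_of_coprime hb hcop'
  have hden : (((a : ℚ) / ((2 ^ n : ℕ) : ℚ)).den : ℤ) = ((2 ^ n : ℕ) : ℤ) := by
    rw [hq]; exact Rat.den_div_eq_of_coprime hb hcop'
  have hden' : ((a : ℚ) / ((2 ^ n : ℕ) : ℚ)).den = 2 ^ n := by exact_mod_cast hden
  rw [rawE, hnum, hden', encode_intCast]

/-! ### computing the raw code from the abstract code -/

noncomputable def nthS (k : ℕ) : ℕ := rawE (Denumerable.ofNat ℚ k)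

lemma cnt_SChar_rawE (q : ℚ) :
    cnt SChar (rawE q + 1) = @Encodable.encode ℚ Primcodable.toEncodable q + 1 := by
  rw [cnt_succ, SChar_rawE, encode'_eq]
  rfl

lemma cnt_SChar_nthS (k : ℕ) : cnt SChar (nthS k + 1) = k + 1 := by
  rw [nthS, cnt_SChar_rawE]
  congr 1
  exact Denumerable.encode_ofNat k

lemma nthS_min (k : ℕ) : ∀ x < nthS k, cnt SChar (x + 1) ≠ k + 1 := by
  intro x hx hcontra
  have h1 := cnt_SChar_nthS k
  have h2 : cnt SChar (nthS k + 1) = cnt SChar (nthS k) + 1 := by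
    rw [cnt_succ, nthS, SChar_rawE]; rfl
  have h3 : cnt SChar (nthS k) = k := by omega
  have h4 : cnt SChar (x + 1) ≤ cnt SChar (nthS k) := cnt_mono _ (by omega)
  omega

lemma rawE_def (q : ℚ) : rawE q = Nat.pair (Encodable.encode q.num) q.den := rfl

attribute [irreducible] cnt SChar nthS rawE

lemma nthS_computable : Computable nthS := by
  have hcnt : Computable (cnt SChar) := cnt_computable SChar_computable
  have hb : Computable₂ (fun k x : ℕ => decide (cnt SChar (x + 1) = k + 1)) := by
    exact Computable₂.comp Primrec.eq.decide.to_comp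
      (hcnt.comp (Computable.succ.comp Computable.snd))
      (Computable.succ.comp Computable.fst)
  have hp : Partrec fun k => Nat.rfind (fun x => Part.some (decide (cnt SChar (x + 1) = k + 1))) :=
    Partrec.rfind hb.partrec₂
  refine Partrec.of_eq_tot hp (fun k => ?_)
  refine Nat.mem_rfind.mpr ⟨?_, ?_⟩
  · rw [Part.mem_some_iff]
    exact (decide_eq_true (cnt_SChar_nthS k)).symm
  · intro m hm
    rw [Part.mem_some_iff]
    exact (decide_eq_false (nthS_min k m hm)).symm

lemma nthS_encode' (q : ℚ) :
    nthS (@Encodable.encode ℚ Primcodable.toEncodable q) = rawE q := by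
  rw [nthS]
  congr 1
  exact Denumerable.ofNat_encode q


/-! ### forward direction -/

lemma pow2_computable : Computable (fun n : ℕ => 2 ^ n) :=
  ((Primrec₂.unpaired'.mp Nat.Primrec.pow).to_comp).comp (Computable.const 2) Computable.id

lemma forward {A : Set ℕ} (hA : ComputableSet A) {r : ℝ} (hd : HasDensity A r) :
    Delta02Real r := by
  obtain ⟨f, hf, hfA⟩ := ComputablePred.computable_iff.mp hA
  set c := cnt f with hc
  set m : ℕ → ℕ := fun n => (c (n + 1) * 2 ^ n) / (n + 1) with hm
  set a : ℕ → ℕ := fun n => m n + (1 - m n % 2) with hadef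
  have ha_odd : ∀ n, a n % 2 = 1 := by intro n; simp only [hadef]; omega
  set q : ℕ → ℚ := fun n => Denumerable.ofNat ℚ (cnt SChar (Nat.pair (2 * a n) (2 ^ n)))
    with hqdef
  have hqval : ∀ n, q n = (a n : ℚ) / ((2 ^ n : ℕ) : ℚ) := by
    intro n
    rw [hqdef]
    simp only
    rw [← rawE_div_pow2 (a n) n (ha_odd n), ← encode'_eq]
    exact Denumerable.ofNat_encode _
  -- computability
  have hccomp : Computable fun n => c (n + 1) := (cnt_computable hf).comp Computable.succ
  have hmcomp : Computable m :=
    Primrec.nat_div.to_comp.comp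
      (Primrec.nat_mul.to_comp.comp hccomp pow2_computable) Computable.succ
  have hacomp : Computable a :=
    Primrec.nat_add.to_comp.comp hmcomp
      (Primrec.nat_sub.to_comp.comp (Computable.const 1)
        (Primrec.nat_mod.to_comp.comp hmcomp (Computable.const 2)))
  have hqcomp : Computable q :=
    (Computable.ofNat ℚ).comp ((cnt_computable SChar_computable).comp
      (Primrec₂.natPair.to_comp.comp
        (Primrec.nat_mul.to_comp.comp (Computable.const 2) hacomp) pow2_computable))
  -- density formula
  have hyeq : ∀ n, partialDensity A n = (c (n + 1) : ℝ) / (n + 1) := by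
    refine partialDensity_eq A c (cnt_zero f) (fun n => ?_)
    have hmem : (n ∈ A) = (f n = true) := congrFun hfA n
    by_cases hb : f n = true
    · simp [hc, cnt_succ, hb, hmem]
    · simp [hc, cnt_succ, hb, hmem]
  -- the error bound
  have hbound : ∀ n, ‖(q n : ℝ) - partialDensity A n‖ ≤ (1 / 2 : ℝ) ^ n := by
    intro n
    have hP : (0 : ℝ) < 2 ^ n := by positivity
    have hS : (0 : ℝ) < (n : ℝ) + 1 := by positivity
    have h1 : m n * (n + 1) ≤ c (n + 1) * 2 ^ n := Nat.div_mul_le_self _ _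
    have h2 : c (n + 1) * 2 ^ n < m n * (n + 1) + (n + 1) := by
      have h2a := lt_div_succ_mul (c (n + 1) * 2 ^ n) (n + 1) (by omega)
      simp only [hm]
      nlinarith [h2a]
    have h3 : a n = m n ∨ a n = m n + 1 := by simp only [hadef]; omega
    have hr1 : ((m n : ℝ)) * ((n : ℝ) + 1) ≤ (c (n + 1) : ℝ) * 2 ^ n := by
      exact_mod_cast h1
    have hr2 : (c (n + 1) : ℝ) * 2 ^ n < (m n : ℝ) * ((n : ℝ) + 1) + ((n : ℝ) + 1) := by
      exact_mod_cast h2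
    have hq' : (q n : ℝ) = (a n : ℝ) / 2 ^ n := by
      rw [hqval n]; push_cast; ring
    rw [hq', hyeq n, Real.norm_eq_abs]
    have key : |(a n : ℝ) * ((n : ℝ) + 1) - (c (n + 1) : ℝ) * 2 ^ n| ≤ (n : ℝ) + 1 := by
      rw [abs_le]
      rcases h3 with h3 | h3 <;> rw [h3] <;> push_cast <;> constructor <;> nlinarith
    have heq : (a n : ℝ) / 2 ^ n - (c (n + 1) : ℝ) / ((n : ℝ) + 1)
        = ((a n : ℝ) * ((n : ℝ) + 1) - (c (n + 1) : ℝ) * 2 ^ n) / (2 ^ n * ((n : ℝ) + 1)) := by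
      field_simp
    rw [heq, abs_div, abs_of_pos (show (0:ℝ) < 2 ^ n * ((n : ℝ) + 1) by positivity)]
    rw [div_le_iff₀ (by positivity)]
    have hpe : (1 / 2 : ℝ) ^ n * (2 ^ n * ((n : ℝ) + 1)) = (n : ℝ) + 1 := by
      rw [one_div, inv_pow]
      field_simp
    rw [hpe]
    exact key
  have hzero : Tendsto (fun n => (q n : ℝ) - partialDensity A n) atTop (nhds 0) :=
    squeeze_zero_norm hbound
      (tendsto_pow_atTop_nhds_zero_of_lt_one (by norm_num) (by norm_num))
  refine ⟨q, hqcomp, ?_⟩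
  have := hzero.add hd
  simpa using this

/-! ### the analysis core of the backward direction -/

lemma density_limit (r : ℝ) (hr0 : 0 ≤ r) (hr1 : r ≤ 1) (Q : ℕ → ℝ)
    (hQ : Tendsto Q atTop (nhds r)) (c : ℕ → ℕ)
    (hcle : ∀ n, c n ≤ n)
    (hstep : ∀ n, c (n + 1) = c n ∨ c (n + 1) = c n + 1)
    (hadd : ∀ n, c (n + 1) = c n + 1 → ((c n : ℝ) + 1) ≤ ((n : ℝ) + 1) * Q n)
    (hnadd : ∀ n, c (n + 1) = c n → ((n : ℝ) + 1) * Q n < (c n : ℝ) + 1) :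
    Tendsto (fun n => (c (n + 1) : ℝ) / ((n : ℝ) + 1)) atTop (nhds r) := by
  set y : ℕ → ℝ := fun n => (c (n + 1) : ℝ) / ((n : ℝ) + 1) with hy
  rw [Metric.tendsto_atTop]
  intro ε hε
  obtain ⟨N₀, hN₀⟩ := (Metric.tendsto_atTop.mp hQ) (ε / 4) (by linarith)
  set N := max N₀ (⌈4 / ε⌉₊ + 1) with hN
  have hNN₀ : N₀ ≤ N := le_max_left _ _
  have hNbig : 4 / ε < (N : ℝ) := by
    have h1 : (4 / ε : ℝ) ≤ (⌈4 / ε⌉₊ : ℝ) := Nat.le_ceil _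
    have hle : (⌈4 / ε⌉₊ + 1 : ℕ) ≤ N := le_max_right _ _
    have h2 : ((⌈4 / ε⌉₊ + 1 : ℕ) : ℝ) ≤ N := Nat.cast_le.mpr hle
    push_cast at h2
    linarith
  have hQclose : ∀ n, N ≤ n → |Q n - r| < ε / 4 := fun n hn => by
    have := hN₀ n (le_trans hNN₀ hn)
    rwa [Real.dist_eq] at this
  have hsmall : ∀ n : ℕ, N ≤ n → 1 / ((n : ℝ) + 1 + 1) < ε / 4 := by
    intro n hn
    have h1 : (N : ℝ) ≤ n := Nat.cast_le.mpr hn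
    have h2 : (0:ℝ) < (n:ℝ) + 1 + 1 := by positivity
    rw [div_lt_iff₀ h2]
    have hε4 : (0:ℝ) < ε / 4 := by linarith
    have h3 : 4 / ε < (n:ℝ) + 1 + 1 := by linarith
    calc (1:ℝ) = (ε/4) * (4/ε) := by field_simp
      _ < (ε/4) * ((n:ℝ)+1+1) := by exact mul_lt_mul_of_pos_left h3 hε4
      _ = ε / 4 * ((n:ℝ)+1+1) := rfl
  have hy_nonneg : ∀ n, 0 ≤ y n := fun n => by
    simp only [hy]; positivity
  have hy_le_one : ∀ n, y n ≤ 1 := fun n => by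
    simp only [hy]
    rw [div_le_one (by positivity)]
    exact_mod_cast hcle (n + 1)
  -- step facts
  have SF1 : ∀ n, c (n + 1 + 1) = c (n + 1) + 1 → y (n + 1) ≤ Q (n + 1) := by
    intro n h
    have h2 := hadd (n + 1) h
    push_cast at h2
    simp only [hy]
    rw [h]
    push_cast
    rw [div_le_iff₀ (by positivity)]
    linarith [mul_comm (Q (n + 1)) ((n:ℝ) + 1 + 1)]
  have SF2 : ∀ n, c (n + 1 + 1) = c (n + 1) → Q (n + 1) < y n + 1 / ((n : ℝ) + 1 + 1) := by
    intro n h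
    have h2 := hnadd (n + 1) h
    push_cast at h2
    simp only [hy]
    have hq2 : Q (n + 1) < ((c (n + 1) : ℝ) + 1) / ((n:ℝ) + 1 + 1) := by
      rw [lt_div_iff₀ (by positivity)]
      linarith [mul_comm (Q (n + 1)) ((n:ℝ) + 1 + 1)]
    have h4 : ((c (n + 1) : ℝ) + 1) / ((n:ℝ) + 1 + 1)
        = (c (n + 1) : ℝ) / ((n:ℝ) + 1 + 1) + 1 / ((n:ℝ) + 1 + 1) := by
      rw [add_div]
    have h5 : (c (n + 1) : ℝ) / ((n:ℝ) + 1 + 1) ≤ (c (n + 1) : ℝ) / ((n:ℝ) + 1) := by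
      rw [div_le_div_iff₀ (by positivity) (by positivity)]
      nlinarith [show (0:ℝ) ≤ (c (n + 1) : ℝ) from Nat.cast_nonneg _]
    linarith
  have SF3 : ∀ n, y n - 1 / ((n : ℝ) + 1 + 1) ≤ y (n + 1) := by
    intro n
    have hcc : c (n + 1) ≤ c (n + 1 + 1) := by rcases hstep (n + 1) with h | h <;> omega
    have h1 : (c (n + 1) : ℝ) / ((n:ℝ) + 1 + 1) ≤ y (n + 1) := by
      simp only [hy]
      push_cast
      rw [div_le_div_iff₀ (by positivity) (by positivity)]
      have hmono : (c (n + 1) : ℝ) ≤ (c (n + 1 + 1) : ℝ) := by exact_mod_cast hcc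
      nlinarith [show (0:ℝ) ≤ (c (n + 1) : ℝ) from Nat.cast_nonneg _]
    have h2 : y n - 1 / ((n:ℝ) + 1 + 1) ≤ (c (n + 1) : ℝ) / ((n:ℝ) + 1 + 1) := by
      simp only [hy]
      rw [sub_le_iff_le_add, div_add_div _ _ (by positivity) (by positivity),
        div_le_div_iff₀ (by positivity) (by positivity)]
      have := hcle (n + 1)
      have hc1 : (c (n + 1) : ℝ) ≤ (n : ℝ) + 1 := by exact_mod_cast this
      nlinarith
    linarith
  have SF4 : ∀ n, c (n + 1 + 1) = c (n + 1) + 1 → y n ≤ y (n + 1) := by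
    intro n h
    simp only [hy]
    rw [h]
    push_cast
    rw [div_le_div_iff₀ (by positivity) (by positivity)]
    have hc1 : (c (n + 1) : ℝ) ≤ (n : ℝ) + 1 := by exact_mod_cast hcle (n + 1)
    nlinarith
  have SF5 : ∀ n, c (n + 1 + 1) = c (n + 1) → y (n + 1) ≤ y n := by
    intro n h
    simp only [hy]
    rw [h]
    push_cast
    rw [div_le_div_iff₀ (by positivity) (by positivity)]
    nlinarith [show (0:ℝ) ≤ (c (n + 1) : ℝ) from Nat.cast_nonneg _]
  -- the key step: if the density is too low, an element gets added
  have hkey : ∀ n, N ≤ n → y n < r - ε / 2 → c (n + 1 + 1) = c (n + 1) + 1 := by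
    intro n hn hy'
    rcases hstep (n + 1) with h | h
    · exfalso
      have h2 := SF2 n h
      have h3 := hsmall n hn
      have h4 := abs_lt.mp (hQclose (n + 1) (by omega))
      linarith [h4.1]
    · exact h
  -- Claim A : upper existence
  have claimA : ∃ n0, N ≤ n0 ∧ y n0 ≤ r + ε / 4 := by
    by_contra hcon
    push_neg at hcon
    have hflat : ∀ n, N ≤ n → c (n + 1 + 1) = c (n + 1) := by
      intro n hn
      rcases hstep (n + 1) with h | h
      · exact h
      · exfalso
        have h1 := SF1 n h
        have h4 := abs_lt.mp (hQclose (n + 1) (by omega))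
        have h5 := hcon (n + 1) (by omega)
        linarith [h4.2]
    have hconst : ∀ m, N ≤ m → c (m + 1) = c (N + 1) := by
      intro m hm
      induction m, hm using Nat.le_induction with
      | base => rfl
      | succ m hm ih => rw [hflat m hm, ih]
    obtain ⟨M₀, hM₀⟩ := exists_nat_gt ((c (N + 1) : ℝ) / (ε / 4))
    set M := max N M₀ with hM
    have hMN : N ≤ M := le_max_left _ _
    have hyM : y M = (c (N + 1) : ℝ) / ((M : ℝ) + 1) := by
      simp only [hy]
      rw [hconst M hMN]
    have hM2 : (c (N + 1) : ℝ) / (ε / 4) < (M : ℝ) + 1 := by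
      have : (M₀ : ℝ) ≤ M := Nat.cast_le.mpr (le_max_right _ _)
      linarith
    have hyM2 : y M < ε / 4 := by
      rw [hyM, div_lt_iff₀ (by positivity)]
      rw [div_lt_iff₀ (by linarith : (0:ℝ) < ε / 4)] at hM2
      linarith [mul_comm ((M:ℝ) + 1) (ε / 4)]
    have := hcon M hMN
    linarith
  -- Claim B : upper maintenance
  have claimB : ∀ n0, N ≤ n0 → y n0 ≤ r + ε / 4 → ∀ n, n0 ≤ n → y n ≤ r + ε / 4 := by
    intro n0 hn0 hy0 n hn
    induction n, hn using Nat.le_induction with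
    | base => exact hy0
    | succ n hn ih =>
      rcases hstep (n + 1) with h | h
      · linarith [SF5 n h]
      · have h1 := SF1 n h
        have h4 := abs_lt.mp (hQclose (n + 1) (by omega))
        linarith [h4.2]
  -- Claim C : lower existence
  have claimC : ∃ n1, N ≤ n1 ∧ r - ε / 2 ≤ y n1 := by
    by_contra hcon
    push_neg at hcon
    have hgrow : ∀ k : ℕ, c (N + 1) + k ≤ c (N + 1 + k) := by
      intro k
      induction k with
      | zero => simp
      | succ k ih =>
        have h1 := hkey (N + k) (by omega) (hcon (N + k) (by omega))
        have h2 : N + 1 + (k + 1) = (N + k) + 1 + 1 := by omega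
        have h3 : N + 1 + k = (N + k) + 1 := by omega
        rw [h2, h1, ← h3]
        omega
    obtain ⟨k, hk⟩ := exists_nat_gt (2 * ((N : ℝ) + 1) / ε)
    have hklb : (k : ℝ) ≤ c (N + 1 + k) := by
      have := hgrow k
      have : (c (N + 1) + k : ℕ) ≤ c (N + 1 + k) := this
      exact_mod_cast le_trans (by omega : k ≤ c (N + 1) + k) this
    have hyk : (k : ℝ) / ((N : ℝ) + (k : ℝ) + 1) ≤ y (N + k) := by
      simp only [hy]
      have he : N + k + 1 = N + 1 + k := by omega
      rw [he]
      push_cast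
      rw [div_le_div_iff₀ (by positivity) (by positivity)]
      nlinarith [hklb, show (0:ℝ) ≤ (k:ℝ) from Nat.cast_nonneg _]
    have hden : (0:ℝ) < (N : ℝ) + (k : ℝ) + 1 := by positivity
    have hkpos : (0:ℝ) < (k:ℝ) := by
      have h0 : (0:ℝ) ≤ 2 * ((N : ℝ) + 1) / ε := by positivity
      linarith
    have hfrac : 1 - ε / 2 < (k : ℝ) / ((N : ℝ) + (k : ℝ) + 1) := by
      rw [show (k : ℝ) / ((N : ℝ) + (k : ℝ) + 1)
          = 1 - ((N:ℝ) + 1) / ((N : ℝ) + (k : ℝ) + 1) by field_simp; ring]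
      have : ((N:ℝ) + 1) / ((N : ℝ) + (k : ℝ) + 1) < ε / 2 := by
        rw [div_lt_iff₀ hden]
        rw [div_lt_iff₀ (by linarith : (0:ℝ) < ε)] at hk
        nlinarith
      linarith
    have := hcon (N + k) (by omega)
    have hcast : ((N + k : ℕ) : ℝ) = (N : ℝ) + (k : ℝ) := by push_cast; ring
    linarith [hyk, hfrac]
  -- Claim D : lower maintenance
  obtain ⟨n0, hn0N, hn0⟩ := claimA
  obtain ⟨n1, hn1N, hn1⟩ := claimC
  have claimD : ∀ n, n1 ≤ n → r - 3 * ε / 4 ≤ y n := by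
    intro n hn
    induction n, hn using Nat.le_induction with
    | base => linarith
    | succ n hn ih =>
      by_cases hcase : r - ε / 2 ≤ y n
      · have h1 := SF3 n
        have h2 := hsmall n (le_trans hn1N hn)
        linarith
      · push_neg at hcase
        have h1 := hkey n (le_trans hn1N hn) hcase
        have h2 := SF4 n h1
        linarith
  refine ⟨max n0 n1, fun n hn => ?_⟩
  have h1 := claimB n0 hn0N hn0 n (le_trans (le_max_left _ _) hn)
  have h2 := claimD n (le_trans (le_max_right _ _) hn)
  rw [Real.dist_eq, abs_lt]
  constructor <;> simp only [hy] at h1 h2 ⊢ <;> linarith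

/-! ### backward direction -/

lemma backward (r : ℝ) (hr0 : 0 ≤ r) (hr1 : r ≤ 1) (q : ℕ → ℚ) (hq : Computable q)
    (hlim : Tendsto (fun n => ((q n : ℚ) : ℝ)) atTop (nhds r)) :
    ∃ A : Set ℕ, ComputableSet A ∧ HasDensity A r := by
  classical
  set nn : ℕ → ℕ :=
    fun n => (Nat.unpair (nthS (@Encodable.encode ℚ Primcodable.toEncodable (q n)))).1 with hnn
  set dd : ℕ → ℕ :=
    fun n => (Nat.unpair (nthS (@Encodable.encode ℚ Primcodable.toEncodable (q n)))).2 with hdd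
  have hnne : ∀ n, nn n = Encodable.encode (q n).num := by
    intro n
    rw [hnn]
    simp only
    rw [nthS_encode', rawE_def, Nat.unpair_pair]
  have hdde : ∀ n, dd n = (q n).den := by
    intro n
    rw [hdd]
    simp only
    rw [nthS_encode', rawE_def, Nat.unpair_pair]
  set condb : ℕ → ℕ → Bool := fun n c =>
    decide (nn n % 2 = 0) && decide ((c + 1) * dd n ≤ (n + 1) * (nn n / 2)) with hcondb
  -- the meaning of condb
  have hcond_iff : ∀ n c, condb n c = true ↔ ((c : ℚ) + 1) ≤ ((n : ℚ) + 1) * q n := by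
    intro n c
    rw [hcondb]
    simp only [Bool.and_eq_true, decide_eq_true_iff]
    have hdenpos : (0 : ℚ) < ((q n).den : ℚ) := by exact_mod_cast (q n).pos
    cases hnum : (q n).num with
    | ofNat k =>
      have he : nn n = 2 * k := by
        rw [hnne, hnum]
        exact encode_intCast k
      have hnumc : ((q n).num : ℚ) = (k : ℚ) := by rw [hnum]; push_cast; rfl
      constructor
      · rintro ⟨-, hle⟩
        rw [he] at hle
        rw [hdde] at hle
        have hle2 : (c + 1) * (q n).den ≤ (n + 1) * k := by
          rwa [show 2 * k / 2 = k by omega] at hle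
        have hq2 : ((c : ℚ) + 1) * ((q n).den : ℚ) ≤ ((n : ℚ) + 1) * (k : ℚ) := by
          exact_mod_cast hle2
        rw [← hnumc, ← Rat.mul_den_eq_num] at hq2
        have := (mul_le_mul_iff_of_pos_right hdenpos).mp (by linarith [hq2] : ((c : ℚ) + 1) * ((q n).den : ℚ) ≤ (((n : ℚ) + 1) * q n) * ((q n).den : ℚ))
        exact this
      · intro hle
        have hq2 : ((c : ℚ) + 1) * ((q n).den : ℚ) ≤ (((n : ℚ) + 1) * q n) * ((q n).den : ℚ) :=
          (mul_le_mul_iff_of_pos_right hdenpos).mpr hle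
        rw [mul_assoc, Rat.mul_den_eq_num, hnumc] at hq2
        have hle2 : (c + 1) * (q n).den ≤ (n + 1) * k := by exact_mod_cast hq2
        refine ⟨by rw [he]; omega, ?_⟩
        rw [he, hdde]
        rwa [show 2 * k / 2 = k by omega]
    | negSucc k =>
      have he : nn n = 2 * k + 1 := by
        rw [hnne, hnum]
        exact encode_negSucc k
      have hqneg : q n < 0 := by
        rw [← Rat.num_neg]
        rw [hnum]
        exact Int.negSucc_lt_zero k
      constructor
      · rintro ⟨hmod, -⟩
        rw [he] at hmod
        omega
      · intro hle
        exfalso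
        have hn1 : (0 : ℚ) < (n : ℚ) + 1 := by positivity
        nlinarith
  -- the counting function
  set cc : ℕ → ℕ := fun n => Nat.rec 0 (fun y IH => IH + (bif condb y IH then 1 else 0)) n
    with hcc
  have hcc0 : cc 0 = 0 := rfl
  have hccs : ∀ n, cc (n + 1) = cc n + (bif condb n (cc n) then 1 else 0) := fun n => rfl
  have hccle : ∀ n, cc n ≤ n := by
    intro n
    induction n with
    | zero => omega
    | succ k ih =>
      rw [hccs k]
      cases condb k (cc k) <;> simp <;> omega
  -- computability
  have hnncomp : Computable nn :=
    (Primrec.fst.comp Primrec.unpair).to_comp.comp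
      (nthS_computable.comp (Computable.encode.comp hq))
  have hddcomp : Computable dd :=
    (Primrec.snd.comp Primrec.unpair).to_comp.comp
      (nthS_computable.comp (Computable.encode.comp hq))
  have hcondbcomp : Computable₂ condb := by
    have b1 : Computable fun p : ℕ × ℕ => decide (nn p.1 % 2 = 0) :=
      Primrec.eq.decide.to_comp.comp
        (Primrec.nat_mod.to_comp.comp (hnncomp.comp Computable.fst) (Computable.const 2))
        (Computable.const 0)
    have b2 : Computable fun p : ℕ × ℕ =>
        decide ((p.2 + 1) * dd p.1 ≤ (p.1 + 1) * (nn p.1 / 2)) :=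
      Primrec.nat_le.decide.to_comp.comp
        (Primrec.nat_mul.to_comp.comp (Computable.succ.comp Computable.snd)
          (hddcomp.comp Computable.fst))
        (Primrec.nat_mul.to_comp.comp (Computable.succ.comp Computable.fst)
          (Primrec.nat_div.to_comp.comp (hnncomp.comp Computable.fst) (Computable.const 2)))
    exact ((Primrec.dom_bool₂ (· && ·)).to_comp).comp b1 b2
  have hcccomp : Computable cc := by
    have h : Computable₂ (fun (_ : ℕ) (p : ℕ × ℕ) => p.2 + (bif condb p.1 p.2 then 1 else 0)) := by
      exact Computable₂.comp Primrec.nat_add.to_comp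
        (Computable.snd.comp Computable.snd)
        (Computable.cond (hcondbcomp.comp (Computable.fst.comp Computable.snd)
            (Computable.snd.comp Computable.snd))
          (Computable.const 1) (Computable.const 0))
    exact (Computable.nat_rec Computable.id (Computable.const 0) h).of_eq (fun n => rfl)
  -- the set
  refine ⟨{x | condb x (cc x) = true}, ?_, ?_⟩
  · exact ComputablePred.computable_iff.mpr
      ⟨fun x => condb x (cc x), hcondbcomp.comp Computable.id hcccomp, rfl⟩
  · -- density
    have hpd : ∀ n, partialDensity {x | condb x (cc x) = true} n = (cc (n + 1) : ℝ) / (n + 1) := by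
      refine partialDensity_eq _ cc hcc0 (fun n => ?_)
      rw [hccs n]
      by_cases hb : condb n (cc n) = true
      · have hmem : n ∈ {x | condb x (cc x) = true} := hb
        rw [if_pos hmem, hb]
        rfl
      · have hmem : n ∉ {x | condb x (cc x) = true} := hb
        rw [if_neg hmem]
        have hb' : condb n (cc n) = false := by simpa using hb
        rw [hb']
        rfl
    have hmain : Tendsto (fun n => (cc (n + 1) : ℝ) / ((n : ℝ) + 1)) atTop (nhds r) := by
      refine density_limit r hr0 hr1 (fun n => ((q n : ℚ) : ℝ)) hlim cc hccle ?_ ?_ ?_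
      · intro n
        rw [hccs n]
        cases condb n (cc n) <;> simp
      · intro n h
        rw [hccs n] at h
        have hb : condb n (cc n) = true := by
          cases hb : condb n (cc n)
          · rw [hb] at h; simp at h
          · rfl
        have := (hcond_iff n (cc n)).mp hb
        have hcast := (Rat.cast_le (K := ℝ)).mpr this
        push_cast at hcast
        convert hcast using 2 <;> push_cast <;> ring
      · intro n h
        rw [hccs n] at h
        have hb : condb n (cc n) = false := by
          cases hb : condb n (cc n)
          · rfl
          · rw [hb] at h; simp at h
        have hnotle : ¬ ((cc n : ℚ) + 1) ≤ ((n : ℚ) + 1) * q n := by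
          intro hcontra
          rw [← hcond_iff n (cc n)] at hcontra
          rw [hb] at hcontra
          exact Bool.false_ne_true hcontra
        push_neg at hnotle
        have hcast := (Rat.cast_lt (K := ℝ)).mpr hnotle
        push_cast at hcast
        convert hcast using 2 <;> push_cast <;> ring
    rw [HasDensity]
    have hfun : partialDensity {x | condb x (cc x) = true}
        = fun n => (cc (n + 1) : ℝ) / ((n : ℝ) + 1) := funext hpd
    rw [hfun]
    exact hmain

end Stmt13Aux


/-- `r ∈ [0,1]` is the density of a computable set iff `r` is a
`Δ⁰₂` real. -/
theorem stmt13 (r : ℝ) (hr : r ∈ Set.Icc (0 : ℝ) 1) :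
    (∃ A : Set ℕ, ComputableSet A ∧ HasDensity A r) ↔ Delta02Real r := by
  constructor
  · rintro ⟨A, hA, hd⟩
    exact Stmt13Aux.forward hA hd
  · rintro ⟨q, hq, hlim⟩
    exact Stmt13Aux.backward r hr.1 hr.2 q hq hlim
end
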